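/- Let 𝓗 be the space of triples of projective lines in ℝP³ with pairwise distinct intersection points, and let π: 𝓗 → Gr(3,ℝ⁴) be the continuous map sending a triple (ℓ₁,ℓ₂,ℓ₃) to its linear span ℓ₁ + ℓ₂ + ℓ₃ (a 3-dimensional subspace of ℝ⁴). Then π is a locally trivial fiber bundle: every point of Gr(3,ℝ⁴) has an open neighborhood U together with a homeomorphism π⁻¹(U) ≅ U × F commuting with the projections to U, where the fiber F is homeomorphic to the space 𝓗′ of triples of projective lines in ℝP² with pairwise distinct intersection points. -/

import Mathlib

open Module Matrix CategoryTheory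

noncomputable section

/-- `ℝ^m` with its Euclidean topology and inner product. -/
abbrev Euc (m : ℕ) : Type := EuclideanSpace ℝ (Fin m)

/-- The Grassmannian `Gr(k, ℝ^m)` of `k`-dimensional linear subspaces of `ℝ^m`. -/
def Gr (k m : ℕ) : Type :=
  { V : Submodule ℝ (Euc m) // finrank ℝ V = k }

/-- The standard topology on the Grassmannian, induced by sending a subspace to the
orthogonal projection onto it. -/
noncomputable instance (k m : ℕ) : TopologicalSpace (Gr k m) :=
  TopologicalSpace.induced
    (fun V : Gr k m =>
      (V.1.subtypeL.comp (Submodule.orthogonalProjectionOnto V.1) : Euc m →L[ℝ] Euc m))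
    inferInstance

/-- The condition that a triple of projective lines (i.e. 2-dimensional subspaces) has
pairwise distinct intersection points: each pairwise intersection is 1-dimensional, and
the three intersections are pairwise distinct. -/
def GoodTriple {m : ℕ} (p : Gr 2 m × Gr 2 m × Gr 2 m) : Prop :=
  finrank ℝ ↥(p.1.1 ⊓ p.2.1.1) = 1 ∧
  finrank ℝ ↥(p.1.1 ⊓ p.2.2.1) = 1 ∧
  finrank ℝ ↥(p.2.1.1 ⊓ p.2.2.1) = 1 ∧
  p.1.1 ⊓ p.2.1.1 ≠ p.1.1 ⊓ p.2.2.1 ∧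
  p.1.1 ⊓ p.2.1.1 ≠ p.2.1.1 ⊓ p.2.2.1 ∧
  p.1.1 ⊓ p.2.2.1 ≠ p.2.1.1 ⊓ p.2.2.1

/-- The space of triples of projective lines in `ℝP^{m-1}` with pairwise distinct
intersection points, as a subspace of `Gr(2,ℝ^m)³`. -/
def Triples (m : ℕ) : Type :=
  { p : Gr 2 m × Gr 2 m × Gr 2 m // GoodTriple p }

instance (m : ℕ) : TopologicalSpace (Triples m) :=
  inferInstanceAs (TopologicalSpace { p : Gr 2 m × Gr 2 m × Gr 2 m // GoodTriple p })

/-- The (partial) flag variety of flags of signature `(0,1,2,3,m)` in `ℝ^m`;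
for `m = 4` this is the complete flag variety `Flag(ℝ⁴)`. -/
def Flag123 (m : ℕ) : Type :=
  { v : Gr 1 m × Gr 2 m × Gr 3 m // v.1.1 ≤ v.2.1.1 ∧ v.2.1.1 ≤ v.2.2.1 }

instance (m : ℕ) : TopologicalSpace (Flag123 m) :=
  inferInstanceAs (TopologicalSpace
    { v : Gr 1 m × Gr 2 m × Gr 3 m // v.1.1 ≤ v.2.1.1 ∧ v.2.1.1 ≤ v.2.2.1 })

/-- The complete flag variety `Flag(ℝ³)`. -/
def FlagR3 : Type := { v : Gr 1 3 × Gr 2 3 // v.1.1 ≤ v.2.1 }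

instance : TopologicalSpace FlagR3 :=
  inferInstanceAs (TopologicalSpace { v : Gr 1 3 × Gr 2 3 // v.1.1 ≤ v.2.1 })

/-- The kernel of the linear functional `rᵢ(A) : ℝ^m → ℝ`, `x ↦ ∑ⱼ A i j * x j`,
given by the `i`-th row of `A`. -/
def rowKer {m : ℕ} (A : Matrix (Fin m) (Fin m) ℝ) (i : Fin m) : Submodule ℝ (Euc m) :=
  LinearMap.ker ((show Euc m →L[ℝ] ℝ from ∑ j : Fin m, A i j • (EuclideanSpace.proj j : Euc m →L[ℝ] ℝ)) : Euc m →ₗ[ℝ] ℝ)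

/-- The span of the first `k` columns of a matrix `A`, as a subspace of `ℝ^m`. -/
def colSpan {m : ℕ} (A : Matrix (Fin m) (Fin m) ℝ) (k : ℕ) : Submodule ℝ (Euc m) :=
  Submodule.span ℝ
    ((fun j : Fin m => (EuclideanSpace.equiv (Fin m) ℝ).symm (fun i => A i j)) ''
      { j : Fin m | (j : ℕ) < k })

/-- The product of diagonal matrices is diagonal. -/
theorem isDiag_mul' {n : ℕ} {A B : Matrix (Fin n) (Fin n) ℝ}
    (hA : A.IsDiag) (hB : B.IsDiag) : (A * B).IsDiag := by
  intro i j hij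
  rw [Matrix.mul_apply]
  refine Finset.sum_eq_zero fun k _ => ?_
  rcases eq_or_ne i k with rfl | hk
  · rw [hB hij, mul_zero]
  · rw [hA hk, zero_mul]

/-- The subgroup `T` of `GL(n,ℝ)` consisting of invertible diagonal matrices. -/
def diagGL (n : ℕ) : Subgroup (Matrix.GeneralLinearGroup (Fin n) ℝ) where
  carrier := { A | (A : Matrix (Fin n) (Fin n) ℝ).IsDiag }
  one_mem' := Matrix.isDiag_one
  mul_mem' := fun ha hb => isDiag_mul' ha hb
  inv_mem' := by
    intro A hA
    show ((A⁻¹ : Matrix.GeneralLinearGroup (Fin n) ℝ) : Matrix (Fin n) (Fin n) ℝ).IsDiag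
    rw [Matrix.coe_units_inv, ← Matrix.IsDiag.diagonal_diag hA, Matrix.inv_diagonal]
    exact Matrix.isDiag_diagonal _

/-- The orthogonal group `O(n)` of `n × n` real orthogonal matrices. -/
abbrev Orth (n : ℕ) := Matrix.orthogonalGroup (Fin n) ℝ

/-- The subgroup `T ∩ O(n)` of diagonal orthogonal matrices (diagonal entries `±1`). -/
def diagOrth (n : ℕ) : Subgroup ↥(Orth n) where
  carrier := { A | (A : Matrix (Fin n) (Fin n) ℝ).IsDiag }
  one_mem' := Matrix.isDiag_one
  mul_mem' := fun ha hb => isDiag_mul' ha hb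
  inv_mem' := by
    intro A hA
    show ((A⁻¹ : ↥(Orth n)) : Matrix (Fin n) (Fin n) ℝ).IsDiag
    rw [Matrix.UnitaryGroup.inv_val, Matrix.star_eq_conjTranspose]
    exact hA.conjTranspose

/-- `SO(n)`, as the subgroup of `O(n)` of matrices of determinant `1`. -/
def SOsub (n : ℕ) : Subgroup ↥(Orth n) where
  carrier := { A | (A : Matrix (Fin n) (Fin n) ℝ).det = 1 }
  one_mem' := by simp
  mul_mem' := by
    intro a b ha hb
    show ((a * b : ↥(Orth n)) : Matrix (Fin n) (Fin n) ℝ).det = 1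
    rw [Matrix.UnitaryGroup.mul_val, Matrix.det_mul, ha, hb, mul_one]
  inv_mem' := by
    intro A hA
    show ((A⁻¹ : ↥(Orth n)) : Matrix (Fin n) (Fin n) ℝ).det = 1
    rw [Matrix.UnitaryGroup.inv_val, Matrix.star_eq_conjTranspose, Matrix.det_conjTranspose]
    simpa using congrArg star hA

/-- The group `SO(n)` of `n × n` real orthogonal matrices of determinant `1`. -/
abbrev SO (n : ℕ) := ↥(SOsub n)

/-- The underlying matrix of an element of `SO(n)`. -/
def soMat {n : ℕ} (A : SO n) : Matrix (Fin n) (Fin n) ℝ :=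
  ((A : ↥(Orth n)) : Matrix (Fin n) (Fin n) ℝ)

/-- The subgroup `Kₙ` of `SO(n)` of diagonal matrices
(entries `±1`, determinant `1`). -/
def Kdiag (n : ℕ) : Subgroup (SO n) where
  carrier := { A | (soMat A).IsDiag }
  one_mem' := Matrix.isDiag_one
  mul_mem' := fun ha hb => isDiag_mul' ha hb
  inv_mem' := by
    intro A hA
    show (soMat A⁻¹).IsDiag
    have h : soMat A⁻¹ = star (soMat A) := rfl
    rw [h, Matrix.star_eq_conjTranspose]
    exact hA.conjTranspose

/-- The Borel subgroup `Bₙ` of `GL(n,ℝ)` of invertible upper-triangular matrices. -/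
def upperB (n : ℕ) : Subgroup (Matrix.GeneralLinearGroup (Fin n) ℝ) where
  carrier := { A | (A : Matrix (Fin n) (Fin n) ℝ).BlockTriangular id }
  one_mem' := Matrix.blockTriangular_one
  mul_mem' := fun ha hb => ha.mul hb
  inv_mem' := by
    intro A hA
    show ((A⁻¹ : Matrix.GeneralLinearGroup (Fin n) ℝ) :
      Matrix (Fin n) (Fin n) ℝ).BlockTriangular id
    rw [Matrix.coe_units_inv]
    haveI := A.invertible
    exact Matrix.blockTriangular_inv_of_blockTriangular hA

/-- The singular chain complex of a topological space: the free simplicial abelian group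
on the singular simplicial set, made into a chain complex via alternating face maps. -/
def singularChainComplex (X : Type) [TopologicalSpace X] : ChainComplex AddCommGrpCat ℕ :=
  (AlgebraicTopology.alternatingFaceMapComplex AddCommGrpCat).obj
    (((CategoryTheory.SimplicialObject.whiskering _ _).obj AddCommGrpCat.free).obj
      (TopCat.toSSet.obj (TopCat.of X)))

/-- The `k`-th integral singular homology group of a topological space. -/
def singularHomology (X : Type) [TopologicalSpace X] (k : ℕ) : AddCommGrpCat :=
  (singularChainComplex X).homology k


section St8dev
open Topology
namespace St8
variable {m : ℕ}

def projL (K : Submodule ℝ (Euc m)) : Euc m →L[ℝ] Euc m :=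
  K.subtypeL.comp (Submodule.orthogonalProjectionOnto K)

def bfun (m : ℕ) : Basis (Fin m) ℝ (Euc m) := (EuclideanSpace.basisFun (Fin m) ℝ).toBasis

def toM (f : Euc m →L[ℝ] Euc m) : Matrix (Fin m) (Fin m) ℝ :=
  LinearMap.toMatrixAlgEquiv (bfun m) (f : Euc m →ₗ[ℝ] Euc m)

lemma bfun_repr (x : Euc m) (i : Fin m) : (bfun m).repr x i = x i := by
  simp [bfun, OrthonormalBasis.coe_toBasis_repr_apply, EuclideanSpace.basisFun_repr]

lemma toM_apply (f : Euc m →L[ℝ] Euc m) (i j : Fin m) :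
    toM f i j = f (EuclideanSpace.single j 1) i := by
  rw [toM, LinearMap.toMatrixAlgEquiv_apply]
  rw [show ((bfun m) j) = EuclideanSpace.single j 1 by
    simp [bfun, OrthonormalBasis.coe_toBasis, EuclideanSpace.basisFun_apply]]
  exact bfun_repr _ i

lemma toM_mul (f g : Euc m →L[ℝ] Euc m) : toM (f ∘L g) = toM f * toM g := by
  rw [toM, toM, toM, ← _root_.map_mul]
  congr 1

lemma toM_one : toM (1 : Euc m →L[ℝ] Euc m) = 1 := by
  rw [toM]; exact _root_.map_one _

lemma toM_add (f g : Euc m →L[ℝ] Euc m) : toM (f + g) = toM f + toM g := by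
  rw [toM, toM, toM, ← _root_.map_add]; congr 1

lemma toM_sub (f g : Euc m →L[ℝ] Euc m) : toM (f - g) = toM f - toM g := by
  rw [toM, toM, toM, ← _root_.map_sub]; congr 1

lemma toM_inj : Function.Injective (toM (m := m)) := by
  intro f g h
  have := (LinearMap.toMatrixAlgEquiv (bfun m)).injective h
  exact ContinuousLinearMap.coe_injective this

lemma toM_mulVec (f : Euc m →L[ℝ] Euc m) (x : Euc m) (i : Fin m) :
    (toM f *ᵥ (fun j => x j)) i = f x i := by
  have h := LinearMap.toMatrix_mulVec_repr (bfun m) (bfun m) (f : Euc m →ₗ[ℝ] Euc m) x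
  have h2 : (⇑((bfun m).repr x) : Fin m → ℝ) = fun j => x j := funext fun j => bfun_repr x j
  have h3 : toM f = LinearMap.toMatrix (bfun m) (bfun m) (f : Euc m →ₗ[ℝ] Euc m) := rfl
  rw [h3, ← h2]
  rw [show (Matrix.mulVec _ _) = _ from h]
  exact bfun_repr _ i

def fromM (M : Matrix (Fin m) (Fin m) ℝ) : Euc m →L[ℝ] Euc m :=
  LinearMap.toContinuousLinearMap ((LinearMap.toMatrixAlgEquiv (bfun m)).symm M)

lemma fromM_toM (f : Euc m →L[ℝ] Euc m) : fromM (toM f) = f := by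
  apply ContinuousLinearMap.coe_injective
  rw [fromM, toM]
  simp

lemma toM_fromM (M : Matrix (Fin m) (Fin m) ℝ) : toM (fromM M) = M := by
  rw [toM, fromM]
  simp

lemma continuous_toM : Continuous (toM (m := m)) := by
  have : toM (m := m) = fun f => ((LinearMap.toMatrixAlgEquiv (bfun m)).toLinearMap.comp
      (ContinuousLinearMap.coeLM ℝ)) f := rfl
  rw [this]
  exact LinearMap.continuous_of_finiteDimensional _

lemma continuous_fromM : Continuous (fromM (m := m)) := by
  have : fromM (m := m) = fun M => ((LinearMap.toContinuousLinearMap.toLinearMap.comp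
      (LinearMap.toMatrixAlgEquiv (bfun m)).symm.toLinearMap) M) := rfl
  rw [this]
  exact LinearMap.continuous_of_finiteDimensional _

lemma isInducing_toM : IsInducing (toM (m := m)) :=
  IsInducing.of_comp continuous_toM continuous_fromM (by
    have : fromM (m := m) ∘ toM = id := funext fun f => fromM_toM f
    rw [this]; exact IsInducing.id)

def pm {k : ℕ} (V : Gr k m) : Matrix (Fin m) (Fin m) ℝ := toM (projL V.1)

lemma isInducing_pm {k : ℕ} : IsInducing (pm (k := k) (m := m)) := by
  have h1 : IsInducing (fun V : Gr k m => projL V.1) := ⟨rfl⟩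
  exact isInducing_toM.comp h1

lemma continuous_pm {k : ℕ} : Continuous (pm (k := k) (m := m)) := isInducing_pm.continuous

lemma continuous_into_Gr {k : ℕ} {X : Type*} [TopologicalSpace X] {f : X → Gr k m}
    (h : Continuous fun x => pm (f x)) : Continuous f :=
  isInducing_pm.continuous_iff.mpr h

lemma continuousOn_into_Gr {k : ℕ} {X : Type*} [TopologicalSpace X] {f : X → Gr k m}
    {s : Set X} (h : ContinuousOn (fun x => pm (f x)) s) : ContinuousOn f s := by
  intro x hx
  have := h x hx
  rw [ContinuousWithinAt, isInducing_pm.nhds_eq_comap, Filter.tendsto_comap_iff]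
  exact this

-- Chunk 2: projection lemmas
section Proj
variable {m : ℕ}
local notation "⟪" x ", " y "⟫" => @inner ℝ _ _ x y

lemma projL_coe (K : Submodule ℝ (Euc m)) (x : Euc m) :
    projL K x = (Submodule.orthogonalProjectionOnto K x : Euc m) := rfl

lemma projL_apply_mem (K : Submodule ℝ (Euc m)) (x : Euc m) : projL K x ∈ K :=
  (Submodule.orthogonalProjectionOnto K x).2

lemma projL_eq_self {K : Submodule ℝ (Euc m)} {x : Euc m} (hx : x ∈ K) : projL K x = x := by
  rw [projL_coe]; exact Submodule.starProjection_eq_self_iff.mpr hx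

lemma projL_sub_mem (K : Submodule ℝ (Euc m)) (x : Euc m) : x - projL K x ∈ Kᗮ :=
  K.sub_starProjection_mem_orthogonal x

lemma projL_inner (K : Submodule ℝ (Euc m)) (x y : Euc m) :
    ⟪projL K x, y⟫ = ⟪x, projL K y⟫ :=
  K.inner_starProjection_left_eq_right x y

lemma projL_eq_of {K : Submodule ℝ (Euc m)} {x v : Euc m} (hv : v ∈ K) (ho : x - v ∈ Kᗮ) :
    projL K x = v := by
  rw [projL_coe]
  refine Submodule.eq_starProjection_of_mem_of_inner_eq_zero hv fun w hw => ?_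
  have := (Submodule.mem_orthogonal _ _).mp ho w hw
  rw [← real_inner_comm]; exact this

lemma projL_eq_zero_iff {K : Submodule ℝ (Euc m)} {x : Euc m} :
    projL K x = 0 ↔ x ∈ Kᗮ := by
  rw [projL_coe]
  constructor
  · intro h
    exact Submodule.orthogonalProjectionOnto_eq_zero_iff.mp (by exact_mod_cast Subtype.ext h)
  · intro h
    rw [Submodule.orthogonalProjectionOnto_eq_zero_iff.mpr h]; rfl

lemma projL_inner_self (K : Submodule ℝ (Euc m)) (x : Euc m) :
    ⟪x, projL K x⟫ = ‖projL K x‖ ^ 2 := by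
  have h1 : ⟪x - projL K x, projL K x⟫ = 0 := by
    have := projL_sub_mem K x
    rw [Submodule.mem_orthogonal'] at this
    exact this _ (projL_apply_mem K x)
  have : ⟪x, projL K x⟫ = ⟪x - projL K x, projL K x⟫ + ⟪projL K x, projL K x⟫ := by
    rw [← inner_add_left]
    congr 1
    abel
  rw [this, h1, zero_add, real_inner_self_eq_norm_sq]

lemma projL_psd (K : Submodule ℝ (Euc m)) (x : Euc m) : 0 ≤ ⟪x, projL K x⟫ := by
  rw [projL_inner_self]; positivity

lemma projL_eq_zero_of_inner {K : Submodule ℝ (Euc m)} {x : Euc m}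
    (h : ⟪x, projL K x⟫ = 0) : projL K x = 0 := by
  rw [projL_inner_self] at h
  have := pow_eq_zero_iff (n := 2) (by norm_num) |>.mp h
  exact norm_eq_zero.mp this

lemma projL_orthogonal (K : Submodule ℝ (Euc m)) :
    projL Kᗮ = 1 - projL K := by
  ext x
  have h1 : x - projL K x ∈ Kᗮ := projL_sub_mem K x
  have h2 : x - (x - projL K x) ∈ Kᗮᗮ := by
    have : x - (x - projL K x) = projL K x := by abel
    rw [this]
    exact Submodule.le_orthogonal_orthogonal K (projL_apply_mem K x)
  have := projL_eq_of h1 h2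
  rw [this]; rfl

lemma toM_projL_span {v : Euc m} (hv : v ≠ 0) :
    toM (projL (Submodule.span ℝ {v})) =
      ((fun i => v i) ⬝ᵥ (fun i => v i))⁻¹ • vecMulVec (fun i => v i) (fun i => v i) := by
  have hd : (fun i => v i) ⬝ᵥ (fun i => v i) = ‖v‖ ^ 2 := by
    rw [← real_inner_self_eq_norm_sq]
    rw [PiLp.inner_apply]
    simp [dotProduct, RCLike.inner_apply, sq]
  ext i j
  rw [toM_apply, projL_coe, Submodule.coe_orthogonalProjectionOnto_apply, Submodule.starProjection_singleton]
  have hi : ⟪v, EuclideanSpace.single j 1⟫ = v j := by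
    rw [real_inner_comm, EuclideanSpace.inner_single_left]
    simp
  rw [hi]
  rw [Matrix.smul_apply, Matrix.vecMulVec_apply, hd]
  have hn : ‖v‖ ^ 2 ≠ 0 := by
    have : ‖v‖ ≠ 0 := norm_ne_zero_iff.mpr hv
    positivity
  show (v j / (‖v‖ ^2 : ℝ)) * v i = (‖v‖^2)⁻¹ * (v i * v j)
  field_simp

lemma add_eq_zero_iff' {P Q : Euc m →L[ℝ] Euc m}
    (hP0 : ∀ x, ⟪x, P x⟫ = 0 → P x = 0) (hPp : ∀ x, 0 ≤ ⟪x, P x⟫)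
    (hQ0 : ∀ x, ⟪x, Q x⟫ = 0 → Q x = 0) (hQp : ∀ x, 0 ≤ ⟪x, Q x⟫) (x : Euc m) :
    (P + Q) x = 0 ↔ P x = 0 ∧ Q x = 0 := by
  constructor
  · intro h
    have hsum : ⟪x, P x⟫ + ⟪x, Q x⟫ = 0 := by
      rw [← inner_add_right]
      rw [show P x + Q x = (P + Q) x from rfl, h, inner_zero_right]
    have h1 : ⟪x, P x⟫ = 0 := le_antisymm (by linarith [hQp x]) (hPp x)
    have h2 : ⟪x, Q x⟫ = 0 := by linarith
    exact ⟨hP0 x h1, hQ0 x h2⟩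
  · rintro ⟨h1, h2⟩
    rw [ContinuousLinearMap.add_apply, h1, h2, add_zero]

end Proj

-- Chunk 3: adjugate kernel lemmas
section Adj
variable {m : ℕ}

lemma adj_diag_ne_zero {M : Matrix (Fin m) (Fin m) ℝ} (hsym : Mᵀ = M) {w : Fin m → ℝ}
    (hker : ∀ y, M *ᵥ y = 0 ↔ ∃ c : ℝ, y = c • w) {j : Fin m} (hwj : w j ≠ 0) :
    M.adjugate j j ≠ 0 := by
  rw [Matrix.adjugate_apply]
  intro hdet
  obtain ⟨v, hv0, hv⟩ := Matrix.exists_mulVec_eq_zero_iff.mpr hdet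
  have hvj : v j = 0 := by
    have h := congrFun hv j
    have h2 : ∑ k, M.updateRow j (Pi.single j (1:ℝ)) j k * v k = 0 := by
      simpa [Matrix.mulVec, dotProduct] using h
    simp only [Matrix.updateRow_self, Pi.single_apply] at h2
    simpa using h2
  have hMw : M *ᵥ w = 0 := (hker w).mpr ⟨1, by simp⟩
  set u := M *ᵥ v with hu
  have hui : ∀ i, i ≠ j → u i = 0 := by
    intro i hij
    have h := congrFun hv i
    have h2 : ∑ k, M.updateRow j (Pi.single j (1:ℝ)) i k * v k = 0 := by
      simpa [Matrix.mulVec, dotProduct] using h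
    simp only [Matrix.updateRow_ne hij] at h2
    rw [hu]
    simpa [Matrix.mulVec, dotProduct] using h2
  have hwu : w ⬝ᵥ u = 0 := by
    rw [hu, dotProduct_mulVec, ← Matrix.mulVec_transpose, hsym, hMw]
    simp [dotProduct]
  have huj : u j = 0 := by
    have : w ⬝ᵥ u = w j * u j := by
      rw [dotProduct]
      rw [Finset.sum_eq_single j]
      · intro b _ hbj
        rw [hui b hbj, mul_zero]
      · intro h; exact absurd (Finset.mem_univ j) h
    rw [this] at hwu
    exact (mul_eq_zero.mp hwu).resolve_left hwj
  have hu0 : u = 0 := by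
    funext i
    rcases eq_or_ne i j with rfl | hij
    · exact huj
    · exact hui i hij
  obtain ⟨c, hc⟩ := (hker v).mp hu0
  have : c = 0 := by
    have := congrFun hc j
    rw [hvj] at this
    have : c * w j = 0 := by
      simpa using this.symm
    exact (mul_eq_zero.mp this).resolve_right hwj
  rw [this, zero_smul] at hc
  exact hv0 hc

lemma adj_kernel_vec {M : Matrix (Fin m) (Fin m) ℝ} (hsym : Mᵀ = M) {w : Fin m → ℝ}
    (hw : w ≠ 0) (hker : ∀ y, M *ᵥ y = 0 ↔ ∃ c : ℝ, y = c • w) {j : Fin m} (hwj : w j ≠ 0) :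
    (M.adjugate *ᵥ Pi.single j 1) ≠ 0 ∧ M *ᵥ (M.adjugate *ᵥ Pi.single j 1) = 0 := by
  have hdet : M.det = 0 := by
    rw [← Matrix.exists_mulVec_eq_zero_iff]
    exact ⟨w, hw, (hker w).mpr ⟨1, by simp⟩⟩
  constructor
  · intro h
    have := congrFun h j
    rw [Matrix.mulVec_single] at this
    simp at this
    exact adj_diag_ne_zero hsym hker hwj this
  · rw [Matrix.mulVec_mulVec, Matrix.mul_adjugate, hdet]
    funext i
    simp [Matrix.mulVec]

end Adj

-- Chunk 4: continuity pattern lemma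
section Pattern
variable {m : ℕ} {X : Type*} [TopologicalSpace X]

lemma continuous_mulVec_const (c : Fin m → ℝ) :
    Continuous (fun M : Matrix (Fin m) (Fin m) ℝ => M *ᵥ c) := by
  refine continuous_pi fun i => ?_
  simp only [Matrix.mulVec, dotProduct]
  exact continuous_finset_sum _ fun j _ =>
    (continuous_id.matrix_elem i j).mul continuous_const

lemma continuous_vecMulVec :
    Continuous (fun p : (Fin m → ℝ) × (Fin m → ℝ) => vecMulVec p.1 p.2) := by
  refine continuous_pi fun i => continuous_pi fun j => ?_
  exact ((continuous_apply i).comp continuous_fst).mul ((continuous_apply j).comp continuous_snd)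

lemma dotProduct_self_pos {v : Fin m → ℝ} (hv : v ≠ 0) : 0 < v ⬝ᵥ v := by
  have h1 : 0 ≤ v ⬝ᵥ v := Finset.sum_nonneg fun i _ => mul_self_nonneg _
  rcases h1.lt_or_eq with h | h
  · exact h
  · exfalso
    apply hv
    funext i
    have := (Finset.sum_eq_zero_iff_of_nonneg (fun i _ => mul_self_nonneg (v i))).mp h.symm i
      (Finset.mem_univ i)
    exact mul_self_eq_zero.mp this

lemma contOn_pattern {s : Set X} {Qf Rf Pf : X → Matrix (Fin m) (Fin m) ℝ}
    (hQ : ContinuousOn Qf s) (hR : ContinuousOn Rf s)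
    (hsym : ∀ t ∈ s, (Qf t)ᵀ = Qf t)
    (hker : ∀ t ∈ s, ∃ w : Fin m → ℝ, w ≠ 0 ∧ ∀ y, Qf t *ᵥ y = 0 ↔ ∃ c : ℝ, y = c • w)
    (hform : ∀ t ∈ s, ∀ z : Fin m → ℝ, z ≠ 0 → Qf t *ᵥ z = 0 →
        Pf t = Rf t - (z ⬝ᵥ z)⁻¹ • vecMulVec z z) :
    ContinuousOn Pf s := by
  intro t₀ ht₀
  obtain ⟨w, hw, hkw⟩ := hker t₀ ht₀
  obtain ⟨j, hwj⟩ := Function.ne_iff.mp hw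
  set zf : X → (Fin m → ℝ) := fun t => (Qf t).adjugate *ᵥ Pi.single j 1 with hzf
  have hzc : ContinuousOn zf s := by
    have h1 : Continuous fun M : Matrix (Fin m) (Fin m) ℝ => M.adjugate *ᵥ Pi.single j 1 :=
      (continuous_mulVec_const _).comp (continuous_id.matrix_adjugate)
    exact h1.comp_continuousOn hQ
  have hz0 : ∀ t ∈ s, zf t ≠ 0 → Pf t = Rf t - (zf t ⬝ᵥ zf t)⁻¹ • vecMulVec (zf t) (zf t) := by
    intro t ht hzne
    obtain ⟨w', hw', hkw'⟩ := hker t ht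
    have hMz : Qf t *ᵥ zf t = 0 := by
      have hdet : (Qf t).det = 0 := by
        rw [← Matrix.exists_mulVec_eq_zero_iff]
        exact ⟨w', hw', (hkw' w').mpr ⟨1, by simp⟩⟩
      rw [hzf]
      simp only
      rw [Matrix.mulVec_mulVec, Matrix.mul_adjugate, hdet]
      funext i
      simp [Matrix.mulVec]
    exact hform t ht (zf t) hzne hMz
  have hzt₀ : zf t₀ ≠ 0 := (adj_kernel_vec (hsym t₀ ht₀) hw hkw hwj).1
  have hmem : {t | zf t ≠ 0} ∈ nhdsWithin t₀ s := by
    have hopen : IsOpen {v : Fin m → ℝ | v ≠ 0} := isOpen_ne_fun continuous_id continuous_const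
    exact (hzc t₀ ht₀).preimage_mem_nhdsWithin (hopen.mem_nhds hzt₀)
  have hF : ContinuousWithinAt
      (fun t => Rf t - (zf t ⬝ᵥ zf t)⁻¹ • vecMulVec (zf t) (zf t)) s t₀ := by
    have hdc : ContinuousWithinAt (fun t => zf t ⬝ᵥ zf t) s t₀ := by
      have : Continuous fun p : (Fin m → ℝ) × (Fin m → ℝ) => p.1 ⬝ᵥ p.2 :=
        continuous_finset_sum _ fun i _ =>
          ((continuous_apply i).comp continuous_fst).mul ((continuous_apply i).comp continuous_snd)
      exact (this.comp_continuousOn ((hzc.prodMk hzc))) t₀ ht₀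
    have hinv : ContinuousWithinAt (fun t => (zf t ⬝ᵥ zf t)⁻¹) s t₀ :=
      hdc.inv₀ (ne_of_gt (dotProduct_self_pos hzt₀))
    have hvv : ContinuousWithinAt (fun t => vecMulVec (zf t) (zf t)) s t₀ :=
      (continuous_vecMulVec.comp_continuousOn (hzc.prodMk hzc)) t₀ ht₀
    exact (hR t₀ ht₀).sub (hinv.smul hvv)
  refine hF.congr_of_eventuallyEq ?_ (hz0 t₀ ht₀ hzt₀)
  filter_upwards [hmem, self_mem_nhdsWithin] with t hzt hts
  exact hz0 t hts hzt

end Pattern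

-- Chunk 5: dimension lemmas and the transported projection lemma
section Dim
variable {m : ℕ}
local notation "⟪" x ", " y "⟫" => @inner ℝ _ _ x y

lemma exists_spanning_of_finrank_one {K : Submodule ℝ (Euc m)} (h : finrank ℝ K = 1) :
    ∃ v : Euc m, v ≠ 0 ∧ K = Submodule.span ℝ {v} := by
  have : Nontrivial K := by
    apply Module.nontrivial_of_finrank_pos (R := ℝ)
    rw [h]; norm_num
  obtain ⟨x, hx⟩ := exists_ne (0 : K)
  refine ⟨x.1, fun h0 => hx (Subtype.ext h0), ?_⟩
  symm
  apply Submodule.eq_of_le_of_finrank_le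
  · rw [Submodule.span_le, Set.singleton_subset_iff]; exact x.2
  · rw [h, finrank_span_singleton fun h0 => hx (Subtype.ext h0)]

lemma span_eq_of_mem_of_finrank_one {K : Submodule ℝ (Euc m)} (h : finrank ℝ K = 1)
    {z : Euc m} (hz : z ≠ 0) (hzK : z ∈ K) : Submodule.span ℝ {z} = K := by
  apply Submodule.eq_of_le_of_finrank_le
  · rw [Submodule.span_le, Set.singleton_subset_iff]; exact hzK
  · rw [h, finrank_span_singleton hz]

lemma orthogonal_finrank (K : Submodule ℝ (Euc m)) :
    finrank ℝ Kᗮ = m - finrank ℝ K := by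
  have := Submodule.finrank_add_finrank_orthogonal K
  rw [finrank_euclideanSpace_fin] at this
  omega

-- Good triple span lemmas
lemma good_le_sup {ℓ₁ ℓ₂ ℓ₃ : Submodule ℝ (Euc m)}
    (h13 : finrank ℝ ↥(ℓ₁ ⊓ ℓ₃) = 1) (h23 : finrank ℝ ↥(ℓ₂ ⊓ ℓ₃) = 1)
    (h3 : finrank ℝ ℓ₃ = 2) (hne : ℓ₁ ⊓ ℓ₃ ≠ ℓ₂ ⊓ ℓ₃) :
    ℓ₃ ≤ ℓ₁ ⊔ ℓ₂ := by
  set L₁ := ℓ₁ ⊓ ℓ₃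
  set L₂ := ℓ₂ ⊓ ℓ₃
  have hinf : finrank ℝ ↥(L₁ ⊓ L₂) = 0 := by
    by_contra h
    have h1 : L₁ ⊓ L₂ = L₁ := by
      apply Submodule.eq_of_le_of_finrank_le inf_le_left
      rw [h13]; omega
    have h2 : L₁ ⊓ L₂ = L₂ := by
      apply Submodule.eq_of_le_of_finrank_le inf_le_right
      rw [h23]; omega
    exact hne (h1.symm.trans h2)
  have hsup : finrank ℝ ↥(L₁ ⊔ L₂) = 2 := by
    have := Submodule.finrank_sup_add_finrank_inf_eq L₁ L₂
    rw [h13, h23, hinf] at this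
    omega
  have heq : L₁ ⊔ L₂ = ℓ₃ := by
    apply Submodule.eq_of_le_of_finrank_le (sup_le inf_le_right inf_le_right)
    rw [h3, hsup]
  calc ℓ₃ = L₁ ⊔ L₂ := heq.symm
    _ ≤ ℓ₁ ⊔ ℓ₂ := sup_le (le_trans inf_le_left le_sup_left) (le_trans inf_le_left le_sup_right)

lemma good_sup_finrank {ℓ₁ ℓ₂ : Submodule ℝ (Euc m)}
    (h1 : finrank ℝ ℓ₁ = 2) (h2 : finrank ℝ ℓ₂ = 2) (h12 : finrank ℝ ↥(ℓ₁ ⊓ ℓ₂) = 1) :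
    finrank ℝ ↥(ℓ₁ ⊔ ℓ₂) = 3 := by
  have := Submodule.finrank_sup_add_finrank_inf_eq ℓ₁ ℓ₂
  rw [h1, h2, h12] at this
  omega

end Dim

-- Chunk 5b: the transported projection lemma
section Trans
local notation "⟪" x ", " y "⟫" => @inner ℝ _ _ x y
open ContinuousLinearMap

lemma map_finrank_of_inj {m n : ℕ} {f : Euc m →ₗ[ℝ] Euc n} (hf : Function.Injective f)
    (p : Submodule ℝ (Euc m)) : finrank ℝ (p.map f) = finrank ℝ p :=
  (LinearEquiv.finrank_eq (Submodule.equivMapOfInjective f hf p)).symm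

lemma mem_orthogonal_map {m : ℕ} (g : Euc m →L[ℝ] Euc m) (ℓ : Submodule ℝ (Euc m)) (x : Euc m) :
    x ∈ (ℓ.map (g : Euc m →ₗ[ℝ] Euc m))ᗮ ↔ adjoint g x ∈ ℓᗮ := by
  rw [Submodule.mem_orthogonal, Submodule.mem_orthogonal]
  constructor
  · intro h y hy
    have h2 := h (g y) (Submodule.mem_map_of_mem hy)
    rw [ContinuousLinearMap.adjoint_inner_right]
    exact h2
  · intro h u hu
    obtain ⟨y, hy, rfl⟩ := hu
    show ⟪g y, x⟫ = 0
    rw [← ContinuousLinearMap.adjoint_inner_right]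
    exact h y hy

lemma trans_main {g : Euc 4 →L[ℝ] Euc 4} (hg : Function.Bijective ⇑g) {ℓ W : Submodule ℝ (Euc 4)}
    (hl : finrank ℝ ℓ = 2) (hW : finrank ℝ W = 3)
    (hmap : ℓ.map (g : Euc 4 →ₗ[ℝ] Euc 4) ≤ W) :
    let L := ℓ.map (g : Euc 4 →ₗ[ℝ] Euc 4)
    let Q := g ∘L (projL ℓ) ∘L (adjoint g) + (1 - projL W)
    (∀ x, Q x = 0 ↔ x ∈ W ⊓ Lᗮ) ∧ finrank ℝ ↥(W ⊓ Lᗮ) = 1 ∧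
      (∀ z : Euc 4, z ≠ 0 → z ∈ W ⊓ Lᗮ →
        projL L = projL W - projL (Submodule.span ℝ {z})) := by
  intro L Q
  have hLfin : finrank ℝ L = 2 := by
    rw [map_finrank_of_inj hg.injective, hl]
  have hLW : L ≤ W := hmap
  refine ⟨?_, ?_, ?_⟩
  · -- kernel characterization
    intro x
    have hA0 : ∀ y, ⟪y, (g ∘L (projL ℓ) ∘L (adjoint g)) y⟫ = 0 →
        (g ∘L (projL ℓ) ∘L (adjoint g)) y = 0 := by
      intro y h
      have h2 : ⟪y, g (projL ℓ (adjoint g y))⟫ = ⟪adjoint g y, projL ℓ (adjoint g y)⟫ := by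
        rw [← ContinuousLinearMap.adjoint_inner_left g]
      simp only [ContinuousLinearMap.comp_apply] at h ⊢
      rw [h2] at h
      rw [projL_eq_zero_of_inner h]
      exact map_zero g
    have hApsd : ∀ y, 0 ≤ ⟪y, (g ∘L (projL ℓ) ∘L (adjoint g)) y⟫ := by
      intro y
      have h2 : ⟪y, g (projL ℓ (adjoint g y))⟫ = ⟪adjoint g y, projL ℓ (adjoint g y)⟫ := by
        rw [← ContinuousLinearMap.adjoint_inner_left g]
      simp only [ContinuousLinearMap.comp_apply]
      rw [h2]
      exact projL_psd _ _
    have hBproj : (1 - projL W : Euc 4 →L[ℝ] Euc 4) = projL Wᗮ := (projL_orthogonal W).symm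
    have hB0 : ∀ y, ⟪y, (1 - projL W : Euc 4 →L[ℝ] Euc 4) y⟫ = 0 →
        (1 - projL W : Euc 4 →L[ℝ] Euc 4) y = 0 := by
      intro y h
      rw [hBproj] at h ⊢
      exact projL_eq_zero_of_inner h
    have hBpsd : ∀ y, 0 ≤ ⟪y, (1 - projL W : Euc 4 →L[ℝ] Euc 4) y⟫ := by
      intro y
      rw [hBproj]
      exact projL_psd _ _
    rw [show Q x = ((g ∘L (projL ℓ) ∘L (adjoint g)) + (1 - projL W)) x from rfl]
    rw [add_eq_zero_iff' hA0 hApsd hB0 hBpsd]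
    have e1 : (g ∘L (projL ℓ) ∘L (adjoint g)) x = 0 ↔ x ∈ Lᗮ := by
      simp only [ContinuousLinearMap.comp_apply]
      rw [mem_orthogonal_map, ← projL_eq_zero_iff]
      constructor
      · intro h
        have : projL ℓ (adjoint g x) = 0 := by
          apply hg.injective
          rw [map_zero]; exact h
        exact this
      · intro h; rw [h, map_zero]
    have e2 : (1 - projL W : Euc 4 →L[ℝ] Euc 4) x = 0 ↔ x ∈ W := by
      rw [hBproj, projL_eq_zero_iff, Submodule.orthogonal_orthogonal]
    rw [e1, e2, Submodule.mem_inf]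
    tauto
  · -- dimension
    have hLperp : finrank ℝ Lᗮ = 2 := by
      rw [orthogonal_finrank, hLfin]
    have hsup : W ⊔ Lᗮ = ⊤ := by
      have h1 : (W ⊔ Lᗮ)ᗮ = ⊥ := by
        rw [← Submodule.inf_orthogonal, Submodule.orthogonal_orthogonal]
        have h3 : Wᗮ ⊓ W = ⊥ := (Submodule.orthogonal_disjoint W).symm.eq_bot
        exact le_bot_iff.mp (le_trans (inf_le_inf_left _ hLW) (le_of_eq h3))
      have := congrArg Submodule.orthogonal h1
      rwa [Submodule.orthogonal_orthogonal, Submodule.bot_orthogonal_eq_top] at this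
    have := Submodule.finrank_sup_add_finrank_inf_eq W Lᗮ
    rw [hW, hLperp, hsup, finrank_top, finrank_euclideanSpace_fin] at this
    omega
  · -- projection formula
    intro z hz hzWL
    obtain ⟨hzW, hzLp⟩ := Submodule.mem_inf.mp hzWL
    have hLeq : L = W ⊓ (Submodule.span ℝ {z})ᗮ := by
      have hle : L ≤ W ⊓ (Submodule.span ℝ {z})ᗮ := by
        refine le_inf hLW ?_
        intro u hu
        rw [Submodule.mem_orthogonal]
        intro w hw
        obtain ⟨c, rfl⟩ := Submodule.mem_span_singleton.mp hw
        rw [inner_smul_left]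
        have h4 : ⟪z, u⟫ = 0 := by
          rw [real_inner_comm u z]
          exact (Submodule.mem_orthogonal _ _).mp hzLp u hu
        rw [h4]; simp
      have hlt : W ⊓ (Submodule.span ℝ {z})ᗮ < W := by
        rw [lt_iff_le_and_ne]
        refine ⟨inf_le_left, ?_⟩
        intro h
        have : z ∈ W ⊓ (Submodule.span ℝ {z})ᗮ := h.symm ▸ hzW
        have hzo : z ∈ (Submodule.span ℝ {z})ᗮ := (Submodule.mem_inf.mp this).2
        have := (Submodule.mem_orthogonal _ _).mp hzo z (Submodule.mem_span_singleton_self z)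
        rw [real_inner_self_eq_norm_sq] at this
        exact hz (by
          have : ‖z‖ = 0 := by nlinarith [norm_nonneg z]
          exact norm_eq_zero.mp this)
      have hfr : finrank ℝ ↥(W ⊓ (Submodule.span ℝ {z})ᗮ) < 3 := by
        rw [← hW]
        exact Submodule.finrank_lt_finrank_of_lt hlt
      apply Submodule.eq_of_le_of_finrank_le hle
      rw [hLfin]; omega
    refine ContinuousLinearMap.ext fun x => ?_
    rw [ContinuousLinearMap.sub_apply]
    apply projL_eq_of
    · -- membership in L
      rw [hLeq, Submodule.mem_inf]
      constructor
      · apply Submodule.sub_mem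
        · exact projL_apply_mem W x
        · have : projL (Submodule.span ℝ {z}) x ∈ Submodule.span ℝ {z} :=
            projL_apply_mem _ x
          obtain ⟨c, hc⟩ := Submodule.mem_span_singleton.mp this
          rw [← hc]
          exact Submodule.smul_mem _ _ hzW
      · rw [Submodule.mem_orthogonal]
        intro w hw
        obtain ⟨c, rfl⟩ := Submodule.mem_span_singleton.mp hw
        rw [inner_smul_left]
        have hzz : ⟪z, projL W x - projL (Submodule.span ℝ {z}) x⟫ = 0 := by
          rw [inner_sub_right]
          have e1 : ⟪z, projL W x⟫ = ⟪x, z⟫ := by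
            rw [← projL_inner W z x, projL_eq_self hzW, real_inner_comm]
          have e2 : ⟪z, projL (Submodule.span ℝ {z}) x⟫ = ⟪x, z⟫ := by
            rw [← projL_inner _ z x, projL_eq_self (Submodule.mem_span_singleton_self z),
              real_inner_comm]
          rw [e1, e2, sub_self]
        rw [hzz]; simp
    · -- orthogonality
      have hrw : x - (projL W x - projL (Submodule.span ℝ {z}) x)
          = (x - projL W x) + projL (Submodule.span ℝ {z}) x := by abel
      rw [hrw]
      apply Submodule.add_mem
      · exact Submodule.orthogonal_le hLW (projL_sub_mem W x)
      · have h1 : Submodule.span ℝ {z} ≤ Lᗮ := by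
          rw [Submodule.span_le, Set.singleton_subset_iff]
          exact hzLp
        exact h1 (projL_apply_mem _ x)

end Trans

-- Chunk 6: coordinate bridges and matrix corollaries
section Bridge
variable {m : ℕ}
local notation "⟪" x ", " y "⟫" => @inner ℝ _ _ x y
open ContinuousLinearMap

def ev (x : Euc m) : Fin m → ℝ := fun i => x i
def es (y : Fin m → ℝ) : Euc m := (WithLp.equiv 2 (Fin m → ℝ)).symm y

@[simp] lemma ev_es (y : Fin m → ℝ) : ev (es y) = y := rfl
@[simp] lemma es_ev (x : Euc m) : es (ev x) = x := rfl
lemma ev_smul (c : ℝ) (x : Euc m) : ev (c • x) = c • ev x := rfl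
lemma es_smul (c : ℝ) (y : Fin m → ℝ) : es (c • y) = c • es y := rfl
@[simp] lemma ev_zero : ev (0 : Euc m) = 0 := rfl
@[simp] lemma es_zero : es (0 : Fin m → ℝ) = 0 := rfl
lemma ev_eq_zero_iff {x : Euc m} : ev x = 0 ↔ x = 0 :=
  ⟨fun h => by rw [← es_ev x, h, es_zero], fun h => by rw [h, ev_zero]⟩
lemma es_eq_zero_iff {y : Fin m → ℝ} : es y = 0 ↔ y = 0 :=
  ⟨fun h => by rw [← ev_es y, h, ev_zero], fun h => by rw [h, es_zero]⟩

lemma toM_mulVec_ev (f : Euc m →L[ℝ] Euc m) (x : Euc m) :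
    toM f *ᵥ ev x = ev (f x) := funext fun i => toM_mulVec f x i

lemma matrix_ker_iff {f : Euc m →L[ℝ] Euc m} {w : Euc m}
    (hker : ∀ x, f x = 0 ↔ x ∈ Submodule.span ℝ {w}) (y : Fin m → ℝ) :
    toM f *ᵥ y = 0 ↔ ∃ c : ℝ, y = c • ev w := by
  have h1 : toM f *ᵥ y = ev (f (es y)) := by
    rw [← ev_es y, toM_mulVec_ev]
    simp
  rw [h1]
  constructor
  · intro h
    have h2 : f (es y) = 0 := ev_eq_zero_iff.mp h
    obtain ⟨c, hc⟩ := Submodule.mem_span_singleton.mp ((hker _).mp h2)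
    exact ⟨c, by rw [← ev_es y, ← hc, ev_smul]⟩
  · rintro ⟨c, rfl⟩
    have : es (c • ev w) = c • w := by rw [es_smul, es_ev]
    rw [this]
    have : f (c • w) = 0 := (hker _).mpr (Submodule.smul_mem _ c (Submodule.mem_span_singleton_self w))
    rw [this, ev_zero]

lemma coord_eq_inner (x : Euc m) (i : Fin m) : x i = ⟪EuclideanSpace.single i 1, x⟫ := by
  rw [EuclideanSpace.inner_single_left]
  simp

lemma toM_adjoint (f : Euc m →L[ℝ] Euc m) : toM (adjoint f) = (toM f)ᵀ := by
  ext i j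
  rw [Matrix.transpose_apply, toM_apply, toM_apply]
  rw [coord_eq_inner ((adjoint f) (EuclideanSpace.single j 1)) i]
  rw [ContinuousLinearMap.adjoint_inner_right]
  rw [real_inner_comm]
  exact (coord_eq_inner _ j).symm

lemma pm_symm (K : Submodule ℝ (Euc m)) : (toM (projL K))ᵀ = toM (projL K) := by
  ext i j
  rw [Matrix.transpose_apply, toM_apply, toM_apply]
  rw [coord_eq_inner (projL K (EuclideanSpace.single i 1)) j,
    coord_eq_inner (projL K (EuclideanSpace.single j 1)) i]
  rw [real_inner_comm]
  exact projL_inner K _ _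

lemma toM_projL_span' {z : Fin m → ℝ} (hz : z ≠ 0) :
    toM (projL (Submodule.span ℝ {es z})) = (z ⬝ᵥ z)⁻¹ • vecMulVec z z := by
  have hz' : es z ≠ 0 := fun h => hz (es_eq_zero_iff.mp h)
  exact toM_projL_span hz'

lemma trans_matrix {g : Euc 4 →L[ℝ] Euc 4} (hg : Function.Bijective ⇑g)
    {ℓ W : Submodule ℝ (Euc 4)}
    (hl : finrank ℝ ℓ = 2) (hW : finrank ℝ W = 3)
    (hmap : ℓ.map (g : Euc 4 →ₗ[ℝ] Euc 4) ≤ W) :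
    ((toM g * toM (projL ℓ) * (toM g)ᵀ + (1 - toM (projL W)))ᵀ
        = toM g * toM (projL ℓ) * (toM g)ᵀ + (1 - toM (projL W))) ∧
    (∃ w : Fin 4 → ℝ, w ≠ 0 ∧ ∀ y,
      (toM g * toM (projL ℓ) * (toM g)ᵀ + (1 - toM (projL W))) *ᵥ y = 0 ↔ ∃ c : ℝ, y = c • w) ∧
    (∀ z : Fin 4 → ℝ, z ≠ 0 →
      (toM g * toM (projL ℓ) * (toM g)ᵀ + (1 - toM (projL W))) *ᵥ z = 0 →
      toM (projL (ℓ.map (g : Euc 4 →ₗ[ℝ] Euc 4)))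
        = toM (projL W) - (z ⬝ᵥ z)⁻¹ • vecMulVec z z) := by
  obtain ⟨hker, hdim, hproj⟩ := trans_main hg hl hW hmap
  set Q := g ∘L (projL ℓ) ∘L (adjoint g) + (1 - projL W) with hQ
  have hQM : toM Q = toM g * toM (projL ℓ) * (toM g)ᵀ + (1 - toM (projL W)) := by
    rw [hQ, toM_add, toM_sub, toM_one, toM_mul, toM_mul, toM_adjoint]
    rw [Matrix.mul_assoc]
  rw [← hQM]
  obtain ⟨w₀, hw₀, hspan⟩ := exists_spanning_of_finrank_one hdim
  have hkerspan : ∀ x, Q x = 0 ↔ x ∈ Submodule.span ℝ {w₀} := by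
    intro x; rw [hker x, ← hspan]
  refine ⟨?_, ⟨ev w₀, fun h => hw₀ (ev_eq_zero_iff.mp h), matrix_ker_iff hkerspan⟩, ?_⟩
  · rw [hQM]
    rw [Matrix.transpose_add, Matrix.transpose_sub, Matrix.transpose_one,
      Matrix.transpose_mul, Matrix.transpose_mul, Matrix.transpose_transpose,
      pm_symm, pm_symm, Matrix.mul_assoc]
  · intro z hz hQz
    have hesz : es z ≠ 0 := fun h => hz (es_eq_zero_iff.mp h)
    have hQesz : Q (es z) = 0 := by
      have h1 : toM Q *ᵥ z = ev (Q (es z)) := by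
        rw [← ev_es z, toM_mulVec_ev]; simp
      rw [h1] at hQz
      exact ev_eq_zero_iff.mp hQz
    have hmem : es z ∈ W ⊓ (ℓ.map (g : Euc 4 →ₗ[ℝ] Euc 4))ᗮ := (hker _).mp hQesz
    have := hproj (es z) hesz hmem
    rw [this, toM_sub, toM_projL_span' hz]

end Bridge

-- Chunk 7: the projection map and its continuity
section PiMap
local notation "⟪" x ", " y "⟫" => @inner ℝ _ _ x y

lemma triple_le_sup {m : ℕ} (t : Triples m) : t.1.2.2.1 ≤ t.1.1.1 ⊔ t.1.2.1.1 :=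
  good_le_sup t.2.2.1 t.2.2.2.1 t.1.2.2.2 t.2.2.2.2.2.2

lemma spanT_eq {m : ℕ} (t : Triples m) :
    t.1.1.1 ⊔ t.1.2.1.1 ⊔ t.1.2.2.1 = t.1.1.1 ⊔ t.1.2.1.1 :=
  sup_eq_left.mpr (triple_le_sup t)

lemma spanT_finrank {m : ℕ} (t : Triples m) :
    finrank ℝ ↥(t.1.1.1 ⊔ t.1.2.1.1 ⊔ t.1.2.2.1) = 3 := by
  rw [spanT_eq]
  exact good_sup_finrank t.1.1.2 t.1.2.1.2 t.2.1

def piMap : Triples 4 → Gr 3 4 := fun t => ⟨t.1.1.1 ⊔ t.1.2.1.1 ⊔ t.1.2.2.1, spanT_finrank t⟩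

lemma ker_two_proj {m : ℕ} (ℓ₁ ℓ₂ : Submodule ℝ (Euc m)) (x : Euc m) :
    (projL ℓ₁ + projL ℓ₂) x = 0 ↔ x ∈ (ℓ₁ ⊔ ℓ₂)ᗮ := by
  rw [add_eq_zero_iff' (fun y h => projL_eq_zero_of_inner h) (projL_psd ℓ₁)
    (fun y h => projL_eq_zero_of_inner h) (projL_psd ℓ₂)]
  rw [projL_eq_zero_iff, projL_eq_zero_iff, ← Submodule.inf_orthogonal, Submodule.mem_inf]

lemma proj_top_formula {V : Submodule ℝ (Euc 4)} (hV : finrank ℝ V = 3) {z : Fin 4 → ℝ}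
    (hz : z ≠ 0) (hzmem : es z ∈ Vᗮ) :
    toM (projL V) = 1 - (z ⬝ᵥ z)⁻¹ • vecMulVec z z := by
  have h1 : finrank ℝ Vᗮ = 1 := by rw [orthogonal_finrank, hV]
  have hesz : es z ≠ 0 := fun h => hz (es_eq_zero_iff.mp h)
  have h2 : Submodule.span ℝ {es z} = Vᗮ := span_eq_of_mem_of_finrank_one h1 hesz hzmem
  have h3 : projL V = 1 - projL Vᗮ := by
    have := projL_orthogonal V
    rw [this]
    abel
  rw [h3, ← h2, toM_sub, toM_one, toM_projL_span' hz]

lemma continuous_piMap : Continuous piMap := by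
  apply continuous_into_Gr
  rw [← continuousOn_univ]
  have hℓ₁ : Continuous fun t : Triples 4 => t.1.1 := (continuous_fst.comp continuous_subtype_val)
  have hℓ₂ : Continuous fun t : Triples 4 => t.1.2.1 :=
    (continuous_fst.comp (continuous_snd.comp continuous_subtype_val))
  apply contOn_pattern (Qf := fun t : Triples 4 => pm t.1.1 + pm t.1.2.1) (Rf := fun _ => 1)
  · exact ((continuous_pm.comp hℓ₁).add (continuous_pm.comp hℓ₂)).continuousOn
  · exact continuousOn_const
  · intro t _
    rw [Matrix.transpose_add]
    show (toM (projL t.1.1.1))ᵀ + (toM (projL t.1.2.1.1))ᵀ = _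
    rw [pm_symm, pm_symm]
    rfl
  · intro t _
    have h1 : finrank ℝ ↥(t.1.1.1 ⊔ t.1.2.1.1)ᗮ = 1 := by
      rw [orthogonal_finrank, good_sup_finrank t.1.1.2 t.1.2.1.2 t.2.1]
    obtain ⟨w₀, hw₀, hspan⟩ := exists_spanning_of_finrank_one h1
    refine ⟨ev w₀, fun h => hw₀ (ev_eq_zero_iff.mp h), ?_⟩
    have heq : pm t.1.1 + pm t.1.2.1 = toM (projL t.1.1.1 + projL t.1.2.1.1) := by
      rw [toM_add]; rfl
    rw [heq]
    apply matrix_ker_iff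
    intro x
    rw [ker_two_proj, ← hspan]
  · intro t _ z hz hQz
    have heq : pm t.1.1 + pm t.1.2.1 = toM (projL t.1.1.1 + projL t.1.2.1.1) := by
      rw [toM_add]; rfl
    rw [heq] at hQz
    have hfz : (projL t.1.1.1 + projL t.1.2.1.1) (es z) = 0 := by
      have h1 : toM (projL t.1.1.1 + projL t.1.2.1.1) *ᵥ z
          = ev ((projL t.1.1.1 + projL t.1.2.1.1) (es z)) := by
        rw [← ev_es z, toM_mulVec_ev]; simp
      rw [h1] at hQz
      exact ev_eq_zero_iff.mp hQz
    have hmem : es z ∈ (t.1.1.1 ⊔ t.1.2.1.1)ᗮ := (ker_two_proj _ _ _).mp hfz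
    have hmem' : es z ∈ ((piMap t).1 : Submodule ℝ (Euc 4))ᗮ := by
      show es z ∈ (t.1.1.1 ⊔ t.1.2.1.1 ⊔ t.1.2.2.1)ᗮ
      rw [spanT_eq]
      exact hmem
    exact proj_top_formula (spanT_finrank t) hz hmem'

end PiMap

-- Chunk 8: base point data
section Base
local notation "⟪" x ", " y "⟫" => @inner ℝ _ _ x y
open ContinuousLinearMap

variable (b : Gr 3 4)

lemma orthb_finrank : finrank ℝ (b.1ᗮ) = 1 := by
  rw [orthogonal_finrank, b.2]

def u0 : Euc 4 :=
  ‖(exists_spanning_of_finrank_one (orthb_finrank b)).choose‖⁻¹ •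
    (exists_spanning_of_finrank_one (orthb_finrank b)).choose

lemma u0_ne : u0 b ≠ 0 := by
  have h := (exists_spanning_of_finrank_one (orthb_finrank b)).choose_spec
  apply smul_ne_zero _ h.1
  simpa using norm_ne_zero_iff.mpr h.1

lemma u0_norm : ‖u0 b‖ = 1 := by
  have h := (exists_spanning_of_finrank_one (orthb_finrank b)).choose_spec
  rw [u0, norm_smul]
  simp [norm_ne_zero_iff.mpr h.1]

lemma u0_mem : u0 b ∈ b.1ᗮ := by
  obtain ⟨h1, h2⟩ := (exists_spanning_of_finrank_one (orthb_finrank b)).choose_spec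
  apply Submodule.smul_mem
  have h3 : (exists_spanning_of_finrank_one (orthb_finrank b)).choose ∈
      Submodule.span ℝ {(exists_spanning_of_finrank_one (orthb_finrank b)).choose} :=
    Submodule.mem_span_singleton_self _
  rw [← h2] at h3
  exact h3

lemma span_u0 : Submodule.span ℝ {u0 b} = b.1ᗮ :=
  span_eq_of_mem_of_finrank_one (orthb_finrank b) (u0_ne b) (u0_mem b)

lemma proj_orthb (x : Euc 4) : projL b.1ᗮ x = ⟪u0 b, x⟫ • u0 b := by
  rw [← span_u0, projL_coe, Submodule.coe_orthogonalProjectionOnto_apply, Submodule.starProjection_singleton, u0_norm]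
  norm_num

-- the moving-frame operator
def gop (V : Gr 3 4) : Euc 4 →L[ℝ] Euc 4 :=
  projL V.1 + (innerSL ℝ (u0 b)).smulRight ((1 - projL V.1) (u0 b))

lemma gop_apply (V : Gr 3 4) (x : Euc 4) :
    gop b V x = projL V.1 x + ⟪u0 b, x⟫ • ((u0 b) - projL V.1 (u0 b)) := rfl

lemma gop_base : gop b b = 1 := by
  refine ContinuousLinearMap.ext fun x => ?_
  rw [gop_apply]
  have h0 : projL b.1 (u0 b) = 0 := projL_eq_zero_iff.mpr (u0_mem b)
  rw [h0, sub_zero]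
  have h1 : projL b.1ᗮ x = x - projL b.1 x := by
    rw [projL_orthogonal]; rfl
  have h2 := proj_orthb b x
  rw [h1] at h2
  show projL b.1 x + ⟪u0 b, x⟫ • u0 b = x
  rw [← h2]
  abel

lemma gop_maps_base (V : Gr 3 4) {x : Euc 4} (hx : x ∈ b.1) : gop b V x = projL V.1 x := by
  rw [gop_apply]
  have : ⟪u0 b, x⟫ = 0 := by
    rw [real_inner_comm]
    exact (Submodule.mem_orthogonal _ _).mp (u0_mem b) x hx
  rw [this, zero_smul, add_zero]

lemma gmat_eq (V : Gr 3 4) :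
    toM (gop b V) = pm V + vecMulVec (ev (u0 b) - pm V *ᵥ ev (u0 b)) (ev (u0 b)) := by
  rw [gop, toM_add]
  congr 1
  ext i j
  rw [toM_apply]
  show (⟪u0 b, EuclideanSpace.single j 1⟫ • ((1 - projL V.1) (u0 b))) i = _
  have h1 : ⟪u0 b, EuclideanSpace.single j 1⟫ = u0 b j := by
    rw [real_inner_comm, EuclideanSpace.inner_single_left]; simp
  have h2 : (ev (u0 b) - pm V *ᵥ ev (u0 b)) i = ((1 - projL V.1) (u0 b)) i := by
    have : pm V *ᵥ ev (u0 b) = ev (projL V.1 (u0 b)) := toM_mulVec_ev _ _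
    rw [Pi.sub_apply, this]
    rfl
  rw [Matrix.vecMulVec_apply, h1, h2]
  exact mul_comm _ _

lemma continuous_gmat : Continuous fun V : Gr 3 4 => toM (gop b V) := by
  have h : (fun V : Gr 3 4 => toM (gop b V))
      = fun V => pm V + vecMulVec (ev (u0 b) - pm V *ᵥ ev (u0 b)) (ev (u0 b)) := by
    funext V; exact gmat_eq b V
  rw [h]
  apply continuous_pm.add
  have h2 : Continuous fun V : Gr 3 4 => ev (u0 b) - pm V *ᵥ ev (u0 b) :=
    continuous_const.sub ((continuous_mulVec_const (ev (u0 b))).comp continuous_pm)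
  exact continuous_vecMulVec.comp (h2.prodMk continuous_const)

lemma gmat_base : toM (gop b b) = 1 := by rw [gop_base]; exact toM_one

-- the isometry J : Euc 3 ≃ b
def onb : OrthonormalBasis (Fin 3) ℝ b.1 :=
  (stdOrthonormalBasis ℝ b.1).reindex (finCongr b.2)

def Jiso : Euc 3 ≃ₗᵢ[ℝ] b.1 := (onb b).repr.symm

def J : Euc 3 →ₗ[ℝ] Euc 4 :=
  b.1.subtype ∘ₗ (Jiso b).toLinearEquiv.toLinearMap

lemma J_apply (x : Euc 3) : J b x = ((Jiso b) x : Euc 4) := rfl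

lemma J_inj : Function.Injective ⇑(J b) := by
  intro x y h
  exact (Jiso b).injective (Subtype.ext h)

lemma J_mem (x : Euc 3) : J b x ∈ b.1 := ((Jiso b) x).2

lemma J_range : LinearMap.range (J b) = b.1 := by
  apply le_antisymm
  · rintro _ ⟨x, rfl⟩; exact J_mem b x
  · intro y hy
    exact ⟨(Jiso b).symm ⟨y, hy⟩, by rw [J_apply]; simp⟩

lemma J_inner (x y : Euc 3) : ⟪J b x, J b y⟫ = ⟪x, y⟫ := by
  rw [J_apply, J_apply]
  rw [show (⟪((Jiso b) x : Euc 4), ((Jiso b) y : Euc 4)⟫ : ℝ) = ⟪(Jiso b) x, (Jiso b) y⟫ from rfl]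
  rw [LinearIsometryEquiv.inner_map_map]

def Jadj : Euc 4 →ₗ[ℝ] Euc 3 :=
  ((Jiso b).symm.toLinearEquiv.toLinearMap) ∘ₗ (Submodule.orthogonalProjectionOnto b.1).toLinearMap

lemma Jadj_apply (y : Euc 4) : Jadj b y = (Jiso b).symm (Submodule.orthogonalProjectionOnto b.1 y) := rfl

lemma Jadj_J (x : Euc 3) : Jadj b (J b x) = x := by
  rw [Jadj_apply, J_apply]
  rw [Submodule.orthogonalProjectionOnto_mem_subspace_eq_self]
  simp

lemma J_Jadj (y : Euc 4) : J b (Jadj b y) = projL b.1 y := by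
  rw [Jadj_apply, J_apply]
  simp [projL_coe]

lemma Jadj_inner (y : Euc 4) (x : Euc 3) : ⟪Jadj b y, x⟫ = ⟪y, J b x⟫ := by
  have h1 : y - projL b.1 y ∈ b.1ᗮ := projL_sub_mem _ _
  have h3 : ⟪y - projL b.1 y, J b x⟫ = 0 := by
    rw [Submodule.mem_orthogonal'] at h1
    exact h1 _ (J_mem b x)
  have h4 : (⟪y - projL b.1 y, J b x⟫ : ℝ) = ⟪y, J b x⟫ - ⟪projL b.1 y, J b x⟫ :=
    inner_sub_left _ _ _
  have h2 : (⟪projL b.1 y, J b x⟫ : ℝ) = ⟪y, J b x⟫ := by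
    rw [h4] at h3
    linarith
  rw [← J_inner b (Jadj b y) x, J_Jadj, h2]

-- the 4×3 matrix of J
def Bm : Matrix (Fin 4) (Fin 3) ℝ :=
  Matrix.of fun i k => (J b (EuclideanSpace.single k 1)) i

lemma ev_J (x : Euc 3) : ev (J b x) = Bm b *ᵥ ev x := by
  funext i
  have hx : x = ∑ k, x k • EuclideanSpace.single k (1:ℝ) := by
    have := (EuclideanSpace.basisFun (Fin 3) ℝ).sum_repr x
    simp only [EuclideanSpace.basisFun_repr, EuclideanSpace.basisFun_apply] at this
    exact this.symm
  rw [Matrix.mulVec, dotProduct]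
  show (J b x) i = _
  rw [coord_eq_inner (J b x) i]
  conv_lhs => rw [hx]
  rw [map_sum (J b), inner_sum]
  apply Finset.sum_congr rfl
  intro k _
  rw [LinearMap.map_smul, inner_smul_right]
  rw [← coord_eq_inner (J b (EuclideanSpace.single k 1)) i]
  show x k * (J b (EuclideanSpace.single k 1)) i = Bm b i k * ev x k
  rw [Bm]
  simp [ev, mul_comm]

lemma ev_Jadj (y : Euc 4) : ev (Jadj b y) = (Bm b)ᵀ *ᵥ ev y := by
  funext k
  rw [Matrix.mulVec, dotProduct]
  show (Jadj b y) k = ∑ i, (Bm b)ᵀ k i * ev y i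
  rw [coord_eq_inner (Jadj b y) k, real_inner_comm, Jadj_inner]
  rw [PiLp.inner_apply]
  apply Finset.sum_congr rfl
  intro i _
  rw [Matrix.transpose_apply, Bm]
  simp [RCLike.inner_apply, ev]

-- up and down of projections at matrix level
lemma matrix_eq_of_mulVec {k : ℕ} {M N : Matrix (Fin k) (Fin k) ℝ}
    (h : ∀ y : Fin k → ℝ, M *ᵥ y = N *ᵥ y) : M = N := by
  ext i j
  have := congrFun (h (Pi.single j 1)) i
  rw [Matrix.mulVec_single, Matrix.mulVec_single] at this
  simpa using this

lemma up_proj (n : Submodule ℝ (Euc 3)) :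
    toM (projL (n.map (J b))) = Bm b * toM (projL n) * (Bm b)ᵀ := by
  have hop : ∀ y : Euc 4, projL (n.map (J b)) y = J b (projL n (Jadj b y)) := by
    intro y
    apply projL_eq_of
    · exact Submodule.mem_map_of_mem (projL_apply_mem _ _)
    · rw [Submodule.mem_orthogonal]
      rintro _ ⟨w, hw, rfl⟩
      have h2 : Jadj b (y - J b (projL n (Jadj b y))) ∈ nᗮ := by
        rw [map_sub, Jadj_J]
        exact projL_sub_mem _ _
      rw [Submodule.mem_orthogonal'] at h2
      have h3 := h2 w hw
      rw [Jadj_inner] at h3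
      show ⟪J b w, y - J b (projL n (Jadj b y))⟫ = 0
      rw [real_inner_comm]
      exact h3
  apply matrix_eq_of_mulVec
  intro y
  have h1 : toM (projL (n.map (J b))) *ᵥ y = ev (projL (n.map (J b)) (es y)) := by
    rw [← ev_es y, toM_mulVec_ev]; simp
  rw [h1, hop, ev_J]
  rw [show ev (projL n (Jadj b (es y))) = toM (projL n) *ᵥ ev (Jadj b (es y)) from
    (toM_mulVec_ev _ _).symm]
  rw [ev_Jadj, ev_es, Matrix.mulVec_mulVec, Matrix.mulVec_mulVec]

lemma down_proj {ℓ : Submodule ℝ (Euc 4)} (hℓ : ℓ ≤ b.1) :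
    toM (projL (ℓ.comap (J b))) = (Bm b)ᵀ * toM (projL ℓ) * Bm b := by
  have hop : ∀ x : Euc 3, projL (ℓ.comap (J b)) x = Jadj b (projL ℓ (J b x)) := by
    intro x
    apply projL_eq_of
    · rw [Submodule.mem_comap, J_Jadj]
      rw [projL_eq_self (hℓ (projL_apply_mem ℓ (J b x)))]
      exact projL_apply_mem ℓ (J b x)
    · rw [Submodule.mem_orthogonal]
      intro w hw
      rw [Submodule.mem_comap] at hw
      have h3 : J b x - projL ℓ (J b x) ∈ ℓᗮ := projL_sub_mem _ _
      rw [Submodule.mem_orthogonal'] at h3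
      have h4 := h3 _ hw
      have h5 : x - Jadj b (projL ℓ (J b x)) = Jadj b (J b x - projL ℓ (J b x)) := by
        rw [map_sub, Jadj_J]
      rw [real_inner_comm, h5, Jadj_inner]
      exact h4
  apply matrix_eq_of_mulVec
  intro y
  have h1 : toM (projL (ℓ.comap (J b))) *ᵥ y = ev (projL (ℓ.comap (J b)) (es y)) := by
    rw [← ev_es y, toM_mulVec_ev]; simp
  rw [h1, hop, ev_Jadj]
  rw [show ev (projL ℓ (J b (es y))) = toM (projL ℓ) *ᵥ ev (J b (es y)) from
    (toM_mulVec_ev _ _).symm]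
  rw [ev_J, ev_es, Matrix.mulVec_mulVec, Matrix.mulVec_mulVec]

lemma comap_finrank {ℓ : Submodule ℝ (Euc 4)} (hℓ : ℓ ≤ b.1) :
    finrank ℝ (ℓ.comap (J b)) = finrank ℝ ℓ := by
  have h1 : (ℓ.comap (J b)).map (J b) = ℓ := by
    rw [Submodule.map_comap_eq, J_range]
    exact inf_eq_right.mpr hℓ
  have h2 := map_finrank_of_inj (J_inj b) (ℓ.comap (J b))
  rw [h1] at h2
  exact h2.symm

end Base

-- Chunk 9: explicit good triple
section Default
variable {m : ℕ}

def E (i : Fin m) : Euc m := EuclideanSpace.single i 1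

lemma E_apply (i j : Fin m) : E i j = if i = j then (1:ℝ) else 0 := by
  by_cases h : i = j <;> simp [E, EuclideanSpace.single_apply, h]

lemma E_ne_zero (i : Fin m) : E i ≠ 0 := by
  intro h
  have := congrFun (congrArg ev h) i
  rw [show ev (E i) i = E i i from rfl, E_apply] at this
  simp at this

def sp2 (i j : Fin m) : Submodule ℝ (Euc m) := Submodule.span ℝ {E i, E j}

lemma sp2_finrank {i j : Fin m} (hij : i ≠ j) : finrank ℝ (sp2 i j) = 2 := by
  have hli : LinearIndependent ℝ ![E i, E j] := by
    have h1 : Orthonormal ℝ (EuclideanSpace.basisFun (Fin m) ℝ) :=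
      (EuclideanSpace.basisFun (Fin m) ℝ).orthonormal
    have h2 := h1.linearIndependent
    have h3 : ![E i, E j] = (⇑(EuclideanSpace.basisFun (Fin m) ℝ)) ∘ ![i, j] := by
      funext k
      fin_cases k <;> simp [E, EuclideanSpace.basisFun_apply]
    rw [h3]
    apply h2.comp
    intro a c hac
    fin_cases a <;> fin_cases c <;> simp_all <;> exact absurd hac hij
  have h4 : Set.range ![E i, E j] = {E i, E j} := by
    ext x
    constructor
    · rintro ⟨k, rfl⟩
      fin_cases k <;> simp
    · rintro (rfl | rfl)
      · exact ⟨0, rfl⟩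
      · exact ⟨1, rfl⟩
  have := finrank_span_eq_card hli
  rw [h4] at this
  rw [sp2, this]
  simp

lemma mem_sp2 {i j : Fin m} (x : Euc m) : x ∈ sp2 i j ↔ ∃ a c : ℝ, a • E i + c • E j = x :=
  Submodule.mem_span_pair

lemma sp2_inf {i j k : Fin m} (hij : i ≠ j) (hik : i ≠ k) (hjk : j ≠ k) :
    sp2 i j ⊓ sp2 j k = Submodule.span ℝ {E j} := by
  apply le_antisymm
  · intro x hx
    obtain ⟨hx1, hx2⟩ := Submodule.mem_inf.mp hx
    obtain ⟨a, c, hac⟩ := (mem_sp2 x).mp hx1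
    obtain ⟨d, e, hde⟩ := (mem_sp2 x).mp hx2
    have hxi : x i = a := by
      rw [← hac]
      show a * E i i + c * E j i = a
      rw [E_apply, E_apply, if_pos rfl, if_neg (Ne.symm hij)]
      ring
    have hxi' : x i = 0 := by
      rw [← hde]
      show d * E j i + e * E k i = 0
      rw [E_apply, E_apply, if_neg (Ne.symm hij), if_neg ?_]
      · ring
      · exact fun h => hik (h.symm ▸ rfl)
    rw [Submodule.mem_span_singleton]
    refine ⟨c, ?_⟩
    have ha0 : a = 0 := by rw [← hxi, hxi']
    rw [← hac, ha0, zero_smul, zero_add]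
  · rw [Submodule.span_le, Set.singleton_subset_iff]
    refine Submodule.mem_inf.mpr ⟨?_, ?_⟩
    · exact (mem_sp2 _).mpr ⟨0, 1, by simp⟩
    · exact (mem_sp2 _).mpr ⟨1, 0, by simp⟩

lemma span_E_ne {i j : Fin m} (hij : i ≠ j) :
    Submodule.span ℝ {E i} ≠ Submodule.span ℝ {E j} := by
  intro h
  have : E i ∈ Submodule.span ℝ {E j} := h ▸ Submodule.mem_span_singleton_self _
  obtain ⟨c, hc⟩ := Submodule.mem_span_singleton.mp this
  have := congrFun (congrArg ev hc) i
  rw [show ev (c • E j) i = c * E j i from rfl, show ev (E i) i = E i i from rfl,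
    E_apply, E_apply, if_pos rfl, if_neg (Ne.symm hij)] at this
  simp at this

-- the standard good triple on indices 0,1,2
def stdTriple (i0 i1 i2 : Fin m) (h01 : i0 ≠ i1) (h02 : i0 ≠ i2) (h12 : i1 ≠ i2) :
    Gr 2 m × Gr 2 m × Gr 2 m :=
  (⟨sp2 i0 i1, sp2_finrank h01⟩, ⟨sp2 i1 i2, sp2_finrank h12⟩,
    ⟨sp2 i2 i0, sp2_finrank (Ne.symm h02)⟩)

lemma stdTriple_good (i0 i1 i2 : Fin m) (h01 : i0 ≠ i1) (h02 : i0 ≠ i2) (h12 : i1 ≠ i2) :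
    GoodTriple (stdTriple i0 i1 i2 h01 h02 h12) := by
  have e12 : sp2 i0 i1 ⊓ sp2 i1 i2 = Submodule.span ℝ {E i1} := sp2_inf h01 h02 h12
  have e13 : sp2 i0 i1 ⊓ sp2 i2 i0 = Submodule.span ℝ {E i0} := by
    rw [show sp2 i0 i1 = sp2 i1 i0 from by rw [sp2, sp2, Set.pair_comm],
      show sp2 i2 i0 = sp2 i0 i2 from by rw [sp2, sp2, Set.pair_comm]]
    exact sp2_inf (Ne.symm h01) h12 h02
  have e23 : sp2 i1 i2 ⊓ sp2 i2 i0 = Submodule.span ℝ {E i2} := sp2_inf h12 (Ne.symm h01) (Ne.symm h02)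
  refine ⟨?_, ?_, ?_, ?_, ?_, ?_⟩
  · show finrank ℝ ↥(sp2 i0 i1 ⊓ sp2 i1 i2) = 1
    rw [e12]; exact finrank_span_singleton (E_ne_zero i1)
  · show finrank ℝ ↥(sp2 i0 i1 ⊓ sp2 i2 i0) = 1
    rw [e13]; exact finrank_span_singleton (E_ne_zero i0)
  · show finrank ℝ ↥(sp2 i1 i2 ⊓ sp2 i2 i0) = 1
    rw [e23]; exact finrank_span_singleton (E_ne_zero i2)
  · show sp2 i0 i1 ⊓ sp2 i1 i2 ≠ sp2 i0 i1 ⊓ sp2 i2 i0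
    rw [e12, e13]; exact span_E_ne (Ne.symm h01)
  · show sp2 i0 i1 ⊓ sp2 i1 i2 ≠ sp2 i1 i2 ⊓ sp2 i2 i0
    rw [e12, e23]; exact span_E_ne h12
  · show sp2 i0 i1 ⊓ sp2 i2 i0 ≠ sp2 i1 i2 ⊓ sp2 i2 i0
    rw [e13, e23]; exact span_E_ne h02

end Default

def defaultT3 : Triples 3 := by
  refine ⟨stdTriple 0 1 2 ?a ?b ?c, stdTriple_good 0 1 2 ?a ?b ?c⟩ <;>
    exact Fin.ne_of_val_ne (by norm_num)

def defaultT4 : Triples 4 := by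
  refine ⟨stdTriple 0 1 2 ?a ?b ?c, stdTriple_good 0 1 2 ?a ?b ?c⟩ <;>
    exact Fin.ne_of_val_ne (by norm_num)

-- Chunk 10: the open set U, inverses, transfer lemmas
section USet
open ContinuousLinearMap
variable (b : Gr 3 4)

def Ub : Set (Gr 3 4) := {V | (toM (gop b V)).det ≠ 0}

lemma isOpen_Ub : IsOpen (Ub b) := by
  have h1 : Continuous fun V : Gr 3 4 => (toM (gop b V)).det := (continuous_gmat b).matrix_det
  exact IsOpen.preimage h1 isOpen_compl_singleton

lemma base_mem_Ub : b ∈ Ub b := by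
  show (toM (gop b b)).det ≠ 0
  rw [gmat_base]
  simp

def gi (V : Gr 3 4) : Euc 4 →L[ℝ] Euc 4 := fromM (toM (gop b V))⁻¹

lemma gi_toM (V : Gr 3 4) : toM (gi b V) = (toM (gop b V))⁻¹ := toM_fromM _

variable {b}

lemma gop_gi {V : Gr 3 4} (hV : V ∈ Ub b) : gop b V ∘L gi b V = 1 := by
  apply toM_inj
  rw [toM_mul, gi_toM, toM_one, Matrix.mul_nonsing_inv _ (isUnit_iff_ne_zero.mpr hV)]

lemma gi_gop {V : Gr 3 4} (hV : V ∈ Ub b) : gi b V ∘L gop b V = 1 := by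
  apply toM_inj
  rw [toM_mul, gi_toM, toM_one, Matrix.nonsing_inv_mul _ (isUnit_iff_ne_zero.mpr hV)]

lemma gop_gi_apply {V : Gr 3 4} (hV : V ∈ Ub b) (x : Euc 4) : gop b V (gi b V x) = x := by
  have := congrArg (fun f => (f : Euc 4 →L[ℝ] Euc 4) x) (gop_gi hV)
  simpa using this

lemma gi_gop_apply {V : Gr 3 4} (hV : V ∈ Ub b) (x : Euc 4) : gi b V (gop b V x) = x := by
  have := congrArg (fun f => (f : Euc 4 →L[ℝ] Euc 4) x) (gi_gop hV)
  simpa using this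

lemma gop_bij {V : Gr 3 4} (hV : V ∈ Ub b) : Function.Bijective ⇑(gop b V) :=
  ⟨Function.LeftInverse.injective (gi_gop_apply hV),
   Function.RightInverse.surjective (gop_gi_apply hV)⟩

lemma gi_bij {V : Gr 3 4} (hV : V ∈ Ub b) : Function.Bijective ⇑(gi b V) :=
  ⟨Function.LeftInverse.injective (gop_gi_apply hV),
   Function.RightInverse.surjective (gi_gop_apply hV)⟩

lemma map_map_comp {f g : Euc 4 →L[ℝ] Euc 4} (p : Submodule ℝ (Euc 4)) :
    (p.map (f : Euc 4 →ₗ[ℝ] Euc 4)).map (g : Euc 4 →ₗ[ℝ] Euc 4)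
      = p.map ((g ∘L f : Euc 4 →L[ℝ] Euc 4) : Euc 4 →ₗ[ℝ] Euc 4) := by
  rw [show ((g ∘L f : Euc 4 →L[ℝ] Euc 4) : Euc 4 →ₗ[ℝ] Euc 4)
      = (g : Euc 4 →ₗ[ℝ] Euc 4) ∘ₗ (f : Euc 4 →ₗ[ℝ] Euc 4) from rfl]
  rw [Submodule.map_comp]

lemma map_one_eq (p : Submodule ℝ (Euc 4)) :
    p.map ((1 : Euc 4 →L[ℝ] Euc 4) : Euc 4 →ₗ[ℝ] Euc 4) = p := by
  rw [show ((1 : Euc 4 →L[ℝ] Euc 4) : Euc 4 →ₗ[ℝ] Euc 4) = LinearMap.id from rfl]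
  exact Submodule.map_id p

lemma map_gop_base {V : Gr 3 4} (hV : V ∈ Ub b) :
    b.1.map ((gop b V : Euc 4 →L[ℝ] Euc 4) : Euc 4 →ₗ[ℝ] Euc 4) = V.1 := by
  apply Submodule.eq_of_le_of_finrank_le
  · rintro _ ⟨x, hx, rfl⟩
    show gop b V x ∈ V.1
    rw [gop_maps_base b V hx]
    exact projL_apply_mem _ _
  · rw [map_finrank_of_inj (gop_bij hV).injective, b.2, V.2]

lemma map_gi_V {V : Gr 3 4} (hV : V ∈ Ub b) :
    V.1.map ((gi b V : Euc 4 →L[ℝ] Euc 4) : Euc 4 →ₗ[ℝ] Euc 4) = b.1 := by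
  rw [← map_gop_base hV, map_map_comp, gi_gop hV, map_one_eq]

-- transfer of the good-triple conditions
def G6 {k : ℕ} (a c d : Submodule ℝ (Euc k)) : Prop :=
  finrank ℝ ↥(a ⊓ c) = 1 ∧ finrank ℝ ↥(a ⊓ d) = 1 ∧ finrank ℝ ↥(c ⊓ d) = 1 ∧
    a ⊓ c ≠ a ⊓ d ∧ a ⊓ c ≠ c ⊓ d ∧ a ⊓ d ≠ c ⊓ d

lemma goodTriple_iff {k : ℕ} (p : Gr 2 k × Gr 2 k × Gr 2 k) :
    GoodTriple p ↔ G6 p.1.1 p.2.1.1 p.2.2.1 := Iff.rfl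

lemma G6.map {k l : ℕ} {f : Euc k →ₗ[ℝ] Euc l} (hf : Function.Injective ⇑f)
    {a c d : Submodule ℝ (Euc k)} (h : G6 a c d) :
    G6 (a.map f) (c.map f) (d.map f) := by
  obtain ⟨h1, h2, h3, h4, h5, h6⟩ := h
  have e1 := Submodule.map_inf f hf (p := a) (q := c)
  have e2 := Submodule.map_inf f hf (p := a) (q := d)
  have e3 := Submodule.map_inf f hf (p := c) (q := d)
  have hinj := Submodule.map_injective_of_injective hf
  refine ⟨?_, ?_, ?_, ?_, ?_, ?_⟩
  · rw [← e1, map_finrank_of_inj hf]; exact h1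
  · rw [← e2, map_finrank_of_inj hf]; exact h2
  · rw [← e3, map_finrank_of_inj hf]; exact h3
  · rw [← e1, ← e2]; exact fun hh => h4 (hinj hh)
  · rw [← e1, ← e3]; exact fun hh => h5 (hinj hh)
  · rw [← e2, ← e3]; exact fun hh => h6 (hinj hh)

lemma map_comap_J (b : Gr 3 4) {p : Submodule ℝ (Euc 4)} (hp : p ≤ b.1) :
    (p.comap (J b)).map (J b) = p := by
  rw [Submodule.map_comap_eq, J_range]
  exact inf_eq_right.mpr hp

lemma G6.comap_J {b : Gr 3 4} {a c d : Submodule ℝ (Euc 4)}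
    (ha : a ≤ b.1) (hc : c ≤ b.1) (hd : d ≤ b.1) (h : G6 a c d) :
    G6 (a.comap (J b)) (c.comap (J b)) (d.comap (J b)) := by
  obtain ⟨h1, h2, h3, h4, h5, h6⟩ := h
  have e1 : a.comap (J b) ⊓ c.comap (J b) = (a ⊓ c).comap (J b) := (Submodule.comap_inf _ _ _).symm
  have e2 : a.comap (J b) ⊓ d.comap (J b) = (a ⊓ d).comap (J b) := (Submodule.comap_inf _ _ _).symm
  have e3 : c.comap (J b) ⊓ d.comap (J b) = (c ⊓ d).comap (J b) := (Submodule.comap_inf _ _ _).symm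
  have hinj : ∀ p q : Submodule ℝ (Euc 4), p ≤ b.1 → q ≤ b.1 →
      p.comap (J b) = q.comap (J b) → p = q := by
    intro p q hp hq hh
    rw [← map_comap_J b hp, ← map_comap_J b hq, hh]
  refine ⟨?_, ?_, ?_, ?_, ?_, ?_⟩
  · rw [e1, comap_finrank b (le_trans inf_le_left ha)]; exact h1
  · rw [e2, comap_finrank b (le_trans inf_le_left ha)]; exact h2
  · rw [e3, comap_finrank b (le_trans inf_le_left hc)]; exact h3
  · rw [e1, e2]
    exact fun hh => h4 (hinj _ _ (le_trans inf_le_left ha) (le_trans inf_le_left ha) hh)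
  · rw [e1, e3]
    exact fun hh => h5 (hinj _ _ (le_trans inf_le_left ha) (le_trans inf_le_left hc) hh)
  · rw [e2, e3]
    exact fun hh => h6 (hinj _ _ (le_trans inf_le_left ha) (le_trans inf_le_left hc) hh)

lemma G6.map_J {b : Gr 3 4} {a c d : Submodule ℝ (Euc 3)} (h : G6 a c d) :
    G6 (a.map (J b)) (c.map (J b)) (d.map (J b)) := h.map (J_inj b)

end USet

-- Chunk 11: the trivialization maps
section Triv
open scoped Classical
open ContinuousLinearMap
variable (b : Gr 3 4)

abbrev clm (f : Euc 4 →L[ℝ] Euc 4) : Euc 4 →ₗ[ℝ] Euc 4 := (f : Euc 4 →ₗ[ℝ] Euc 4)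

lemma line1_le (t : Triples 4) : t.1.1.1 ≤ (piMap t).1 := le_trans le_sup_left le_sup_left
lemma line2_le (t : Triples 4) : t.1.2.1.1 ≤ (piMap t).1 := le_trans le_sup_right le_sup_left
lemma line3_le (t : Triples 4) : t.1.2.2.1 ≤ (piMap t).1 := le_sup_right

variable {b}

lemma map_gi_le {V : Gr 3 4} (hV : V ∈ Ub b) {ℓ : Submodule ℝ (Euc 4)} (hℓ : ℓ ≤ V.1) :
    ℓ.map (clm (gi b V)) ≤ b.1 :=
  le_trans (Submodule.map_mono hℓ) (le_of_eq (map_gi_V hV))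

lemma map_gi_finrank {V : Gr 3 4} (hV : V ∈ Ub b) {ℓ : Submodule ℝ (Euc 4)}
    (hr : finrank ℝ ℓ = 2) : finrank ℝ (ℓ.map (clm (gi b V))) = 2 := by
  rw [map_finrank_of_inj (gi_bij hV).injective, hr]

lemma fib_finrank {V : Gr 3 4} (hV : V ∈ Ub b) {ℓ : Submodule ℝ (Euc 4)}
    (hℓ : ℓ ≤ V.1) (hr : finrank ℝ ℓ = 2) :
    finrank ℝ ((ℓ.map (clm (gi b V))).comap (J b)) = 2 := by
  rw [comap_finrank b (map_gi_le hV hℓ), map_gi_finrank hV hr]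

variable (b)

def fiber (t : Triples 4) : Triples 3 :=
  if h : piMap t ∈ Ub b then
    ⟨(⟨(t.1.1.1.map (clm (gi b (piMap t)))).comap (J b),
        fib_finrank h (line1_le t) t.1.1.2⟩,
      ⟨(t.1.2.1.1.map (clm (gi b (piMap t)))).comap (J b),
        fib_finrank h (line2_le t) t.1.2.1.2⟩,
      ⟨(t.1.2.2.1.map (clm (gi b (piMap t)))).comap (J b),
        fib_finrank h (line3_le t) t.1.2.2.2⟩),
      by
        rw [goodTriple_iff]
        have hg : G6 t.1.1.1 t.1.2.1.1 t.1.2.2.1 := (goodTriple_iff _).mp t.2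
        exact (hg.map (gi_bij h).injective).comap_J
          (map_gi_le h (line1_le t)) (map_gi_le h (line2_le t)) (map_gi_le h (line3_le t))⟩
  else defaultT3

lemma map_J_finrank (m : Submodule ℝ (Euc 3)) : finrank ℝ (m.map (J b)) = finrank ℝ m :=
  map_finrank_of_inj (J_inj b) m

lemma map_J_le (m : Submodule ℝ (Euc 3)) : m.map (J b) ≤ b.1 := by
  rintro _ ⟨x, hx, rfl⟩
  exact J_mem b x

variable {b}

lemma map_gop_le {V : Gr 3 4} (hV : V ∈ Ub b) {p : Submodule ℝ (Euc 4)} (hp : p ≤ b.1) :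
    p.map (clm (gop b V)) ≤ V.1 :=
  le_trans (Submodule.map_mono hp) (le_of_eq (map_gop_base hV))

lemma inv_finrank {V : Gr 3 4} (hV : V ∈ Ub b) (m : Submodule ℝ (Euc 3))
    (hr : finrank ℝ m = 2) :
    finrank ℝ ((m.map (J b)).map (clm (gop b V))) = 2 := by
  rw [map_finrank_of_inj (gop_bij hV).injective, map_J_finrank b m, hr]

variable (b)

def invT (p : Gr 3 4 × Triples 3) : Triples 4 :=
  if h : p.1 ∈ Ub b then
    ⟨(⟨(p.2.1.1.1.map (J b)).map (clm (gop b p.1)), inv_finrank h _ p.2.1.1.2⟩,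
      ⟨(p.2.1.2.1.1.map (J b)).map (clm (gop b p.1)), inv_finrank h _ p.2.1.2.1.2⟩,
      ⟨(p.2.1.2.2.1.map (J b)).map (clm (gop b p.1)), inv_finrank h _ p.2.1.2.2.2⟩),
      by
        rw [goodTriple_iff]
        have hg : G6 p.2.1.1.1 p.2.1.2.1.1 p.2.1.2.2.1 := (goodTriple_iff _).mp p.2.2
        exact (hg.map_J (b := b)).map (gop_bij h).injective⟩
  else defaultT4

-- span of the inverse triple
lemma invT_span {p : Gr 3 4 × Triples 3} (hp : p.1 ∈ Ub b) : piMap (invT b p) = p.1 := by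
  apply Subtype.ext
  show (invT b p).1.1.1 ⊔ (invT b p).1.2.1.1 ⊔ (invT b p).1.2.2.1 = p.1.1
  erw [invT, dif_pos hp]
  show ((p.2.1.1.1.map (J b)).map (clm (gop b p.1))) ⊔ _ ⊔ _ = p.1.1
  rw [← Submodule.map_sup, ← Submodule.map_sup, ← Submodule.map_sup, ← Submodule.map_sup]
  have htop : p.2.1.1.1 ⊔ p.2.1.2.1.1 ⊔ p.2.1.2.2.1 = (⊤ : Submodule ℝ (Euc 3)) := by
    apply Submodule.eq_top_of_finrank_eq
    rw [spanT_finrank p.2, finrank_euclideanSpace_fin]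
  rw [htop, Submodule.map_top, J_range]
  exact map_gop_base hp

lemma fiber_spec {t : Triples 4} (ht : piMap t ∈ Ub b) :
    ((fiber b t).1.1.1 = (t.1.1.1.map (clm (gi b (piMap t)))).comap (J b)) ∧
    ((fiber b t).1.2.1.1 = (t.1.2.1.1.map (clm (gi b (piMap t)))).comap (J b)) ∧
    ((fiber b t).1.2.2.1 = (t.1.2.2.1.map (clm (gi b (piMap t)))).comap (J b)) := by
  erw [fiber, dif_pos ht]
  exact ⟨rfl, rfl, rfl⟩

-- the roundtrip on a single subspace
lemma roundtrip_left {V : Gr 3 4} (hV : V ∈ Ub b) {ℓ : Submodule ℝ (Euc 4)} (hℓ : ℓ ≤ V.1) :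
    (((ℓ.map (clm (gi b V))).comap (J b)).map (J b)).map (clm (gop b V)) = ℓ := by
  rw [map_comap_J b (map_gi_le hV hℓ), map_map_comp, gop_gi hV, map_one_eq]

lemma roundtrip_right {V : Gr 3 4} (hV : V ∈ Ub b) (m : Submodule ℝ (Euc 3)) :
    (((m.map (J b)).map (clm (gop b V))).map (clm (gi b V))).comap (J b) = m := by
  rw [map_map_comp, gi_gop hV, map_one_eq, Submodule.comap_map_eq_of_injective (J_inj b)]

lemma left_inv' {t : Triples 4} (ht : piMap t ∈ Ub b) :
    invT b (piMap t, fiber b t) = t := by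
  apply Subtype.ext
  obtain ⟨f1, f2, f3⟩ := fiber_spec b ht
  erw [invT, dif_pos ht]
  refine Prod.ext ?_ (Prod.ext ?_ ?_)
  · apply Subtype.ext
    show ((fiber b t).1.1.1.map (J b)).map (clm (gop b (piMap t))) = t.1.1.1
    rw [f1]
    exact roundtrip_left b ht (line1_le t)
  · apply Subtype.ext
    show ((fiber b t).1.2.1.1.map (J b)).map (clm (gop b (piMap t))) = t.1.2.1.1
    rw [f2]
    exact roundtrip_left b ht (line2_le t)
  · apply Subtype.ext
    show ((fiber b t).1.2.2.1.map (J b)).map (clm (gop b (piMap t))) = t.1.2.2.1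
    rw [f3]
    exact roundtrip_left b ht (line3_le t)

lemma right_inv' {p : Gr 3 4 × Triples 3} (hp : p.1 ∈ Ub b) :
    (piMap (invT b p), fiber b (invT b p)) = p := by
  have hspan := invT_span b hp
  refine Prod.ext hspan ?_
  show fiber b (invT b p) = p.2
  have hin : piMap (invT b p) ∈ Ub b := by rw [hspan]; exact hp
  apply Subtype.ext
  obtain ⟨f1, f2, f3⟩ := fiber_spec b hin
  refine Prod.ext ?_ (Prod.ext ?_ ?_)
  · apply Subtype.ext
    show (fiber b (invT b p)).1.1.1 = p.2.1.1.1
    rw [f1]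
    have e1 : (invT b p).1.1.1 = (p.2.1.1.1.map (J b)).map (clm (gop b p.1)) := by
      erw [invT, dif_pos hp]
    rw [e1]
    have e2 : gi b (piMap (invT b p)) = gi b p.1 := by rw [hspan]
    rw [e2]
    exact roundtrip_right b hp _
  · apply Subtype.ext
    show (fiber b (invT b p)).1.2.1.1 = p.2.1.2.1.1
    rw [f2]
    have e1 : (invT b p).1.2.1.1 = (p.2.1.2.1.1.map (J b)).map (clm (gop b p.1)) := by
      erw [invT, dif_pos hp]
    rw [e1]
    have e2 : gi b (piMap (invT b p)) = gi b p.1 := by rw [hspan]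
    rw [e2]
    exact roundtrip_right b hp _
  · apply Subtype.ext
    show (fiber b (invT b p)).1.2.2.1 = p.2.1.2.2.1
    rw [f3]
    have e1 : (invT b p).1.2.2.1 = (p.2.1.2.2.1.map (J b)).map (clm (gop b p.1)) := by
      erw [invT, dif_pos hp]
    rw [e1]
    have e2 : gi b (piMap (invT b p)) = gi b p.1 := by rw [hspan]
    rw [e2]
    exact roundtrip_right b hp _

end Triv

-- Chunk 12: continuity of the trivialization maps
section TrivCont
open ContinuousLinearMap
variable (b : Gr 3 4)

lemma contOn_mmul {X : Type*} [TopologicalSpace X] {k l n : ℕ} {s : Set X}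
    {f : X → Matrix (Fin k) (Fin l) ℝ} {g : X → Matrix (Fin l) (Fin n) ℝ}
    (hf : ContinuousOn f s) (hg : ContinuousOn g s) :
    ContinuousOn (fun x => f x * g x) s := by
  have h : Continuous fun q : Matrix (Fin k) (Fin l) ℝ × Matrix (Fin l) (Fin n) ℝ =>
      q.1 * q.2 := by
    apply continuous_matrix
    intro i j
    simp only [Matrix.mul_apply]
    apply continuous_finset_sum
    intro c _
    exact (continuous_fst.matrix_elem i c).mul (continuous_snd.matrix_elem c j)
  exact h.comp_continuousOn (hf.prodMk hg)

def srcSet : Set (Triples 4) := piMap ⁻¹' (Ub b)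

lemma contOn_mtrans {X : Type*} [TopologicalSpace X] {k l : ℕ} {s : Set X}
    {f : X → Matrix (Fin k) (Fin l) ℝ} (hf : ContinuousOn f s) :
    ContinuousOn (fun x => (f x)ᵀ) s :=
  (Continuous.matrix_transpose continuous_id).comp_continuousOn hf

lemma contOn_inv_gmat :
    ContinuousOn (fun t : Triples 4 => (toM (gop b (piMap t)))⁻¹) (srcSet b) := by
  have hG : Continuous fun t : Triples 4 => toM (gop b (piMap t)) :=
    (continuous_gmat b).comp continuous_piMap
  have heq : (fun t : Triples 4 => (toM (gop b (piMap t)))⁻¹)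
      = fun t => ((toM (gop b (piMap t))).det)⁻¹ • (toM (gop b (piMap t))).adjugate := by
    funext t
    rw [Matrix.inv_def, Ring.inverse_eq_inv']
  rw [heq]
  apply ContinuousOn.fun_smul
  · exact ContinuousOn.inv₀ hG.matrix_det.continuousOn (fun t ht => ht)
  · exact hG.matrix_adjugate.continuousOn

lemma toM_gi_eq (V : Gr 3 4) : toM (gi b V) = (toM (gop b V))⁻¹ := gi_toM b V

lemma contOn_fiber_matrix (sel : Triples 4 → Gr 2 4) (hsel : Continuous sel)
    (hle : ∀ t, (sel t).1 ≤ (piMap t).1) :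
    ContinuousOn
      (fun t => toM (projL ((((sel t).1.map (clm (gi b (piMap t)))).comap (J b))))) (srcSet b) := by
  have hgi : ContinuousOn (fun t : Triples 4 => toM (gi b (piMap t))) (srcSet b) := by
    have : (fun t : Triples 4 => toM (gi b (piMap t)))
        = fun t => (toM (gop b (piMap t)))⁻¹ := funext fun t => toM_gi_eq b _
    rw [this]
    exact contOn_inv_gmat b
  have hP : Continuous fun t : Triples 4 => toM (projL (sel t).1) :=
    continuous_pm.comp hsel
  have h1 : ContinuousOn
      (fun t => toM (projL ((sel t).1.map (clm (gi b (piMap t)))))) (srcSet b) := by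
    apply contOn_pattern
      (Qf := fun t => toM (gi b (piMap t)) * toM (projL (sel t).1) * (toM (gi b (piMap t)))ᵀ
        + (1 - toM (projL b.1)))
      (Rf := fun _ => toM (projL b.1))
    · apply ContinuousOn.add
      · exact (contOn_mmul (contOn_mmul hgi hP.continuousOn)
          (contOn_mtrans hgi))
      · exact continuousOn_const
    · exact continuousOn_const
    · intro t ht
      exact (trans_matrix (gi_bij ht) (sel t).2 b.2 (map_gi_le ht (hle t))).1
    · intro t ht
      exact (trans_matrix (gi_bij ht) (sel t).2 b.2 (map_gi_le ht (hle t))).2.1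
    · intro t ht
      exact (trans_matrix (gi_bij ht) (sel t).2 b.2 (map_gi_le ht (hle t))).2.2
  have h2 : ContinuousOn
      (fun t => (Bm b)ᵀ * toM (projL ((sel t).1.map (clm (gi b (piMap t))))) * Bm b)
      (srcSet b) := contOn_mmul (contOn_mmul continuousOn_const h1) continuousOn_const
  apply ContinuousOn.congr h2
  intro t ht
  exact down_proj b (map_gi_le ht (hle t))

lemma cont_sel1 : Continuous fun t : Triples 4 => t.1.1 :=
  continuous_fst.comp continuous_subtype_val
lemma cont_sel2 : Continuous fun t : Triples 4 => t.1.2.1 :=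
  continuous_fst.comp (continuous_snd.comp continuous_subtype_val)
lemma cont_sel3 : Continuous fun t : Triples 4 => t.1.2.2 :=
  continuous_snd.comp (continuous_snd.comp continuous_subtype_val)

lemma contOn_fiber : ContinuousOn (fiber b) (srcSet b) := by
  refine (Topology.IsEmbedding.subtypeVal (p := @GoodTriple 3)).isInducing.continuousOn_iff.mpr ?_
  have c1 : ContinuousOn (fun t => (fiber b t).1.1) (srcSet b) := by
    apply continuousOn_into_Gr
    apply ContinuousOn.congr (contOn_fiber_matrix b _ cont_sel1 line1_le)
    intro t ht
    show pm (fiber b t).1.1 = _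
    rw [pm, (fiber_spec b ht).1]
  have c2 : ContinuousOn (fun t => (fiber b t).1.2.1) (srcSet b) := by
    apply continuousOn_into_Gr
    apply ContinuousOn.congr (contOn_fiber_matrix b _ cont_sel2 line2_le)
    intro t ht
    show pm (fiber b t).1.2.1 = _
    rw [pm, (fiber_spec b ht).2.1]
  have c3 : ContinuousOn (fun t => (fiber b t).1.2.2) (srcSet b) := by
    apply continuousOn_into_Gr
    apply ContinuousOn.congr (contOn_fiber_matrix b _ cont_sel3 line3_le)
    intro t ht
    show pm (fiber b t).1.2.2 = _
    rw [pm, (fiber_spec b ht).2.2]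
  exact c1.prodMk (c2.prodMk c3)

def tgtSet : Set (Gr 3 4 × Triples 3) := (Ub b) ×ˢ Set.univ

lemma mem_tgt {p : Gr 3 4 × Triples 3} (hp : p ∈ tgtSet b) : p.1 ∈ Ub b := hp.1

lemma contOn_invT_matrix (sel : Triples 3 → Gr 2 3) (hsel : Continuous sel) :
    ContinuousOn
      (fun p : Gr 3 4 × Triples 3 =>
        toM (projL (((sel p.2).1.map (J b)).map (clm (gop b p.1))))) (tgtSet b) := by
  have hg : ContinuousOn (fun p : Gr 3 4 × Triples 3 => toM (gop b p.1)) (tgtSet b) :=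
    ((continuous_gmat b).comp continuous_fst).continuousOn
  have hP : ContinuousOn (fun p : Gr 3 4 × Triples 3 =>
      Bm b * toM (projL (sel p.2).1) * (Bm b)ᵀ) (tgtSet b) := by
    apply contOn_mmul (contOn_mmul continuousOn_const _) continuousOn_const
    exact (continuous_pm.comp (hsel.comp continuous_snd)).continuousOn
  apply contOn_pattern
    (Qf := fun p : Gr 3 4 × Triples 3 =>
      toM (gop b p.1) * toM (projL ((sel p.2).1.map (J b))) * (toM (gop b p.1))ᵀ
        + (1 - toM (projL p.1.1)))
    (Rf := fun p => toM (projL p.1.1))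
  · apply ContinuousOn.add
    · apply contOn_mmul (contOn_mmul hg _) (contOn_mtrans hg)
      apply ContinuousOn.congr hP
      intro p _
      exact up_proj b (sel p.2).1
    · apply ContinuousOn.sub continuousOn_const
      exact (continuous_pm.comp continuous_fst).continuousOn
  · exact (continuous_pm.comp continuous_fst).continuousOn
  · intro p hp
    exact (trans_matrix (gop_bij (mem_tgt b hp))
      (by rw [map_J_finrank b]; exact (sel p.2).2) p.1.2
      (map_gop_le (mem_tgt b hp) (map_J_le b _))).1
  · intro p hp
    exact (trans_matrix (gop_bij (mem_tgt b hp))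
      (by rw [map_J_finrank b]; exact (sel p.2).2) p.1.2
      (map_gop_le (mem_tgt b hp) (map_J_le b _))).2.1
  · intro p hp
    exact (trans_matrix (gop_bij (mem_tgt b hp))
      (by rw [map_J_finrank b]; exact (sel p.2).2) p.1.2
      (map_gop_le (mem_tgt b hp) (map_J_le b _))).2.2

lemma cont_tsel1 : Continuous fun q : Triples 3 => q.1.1 :=
  continuous_fst.comp continuous_subtype_val
lemma cont_tsel2 : Continuous fun q : Triples 3 => q.1.2.1 :=
  continuous_fst.comp (continuous_snd.comp continuous_subtype_val)
lemma cont_tsel3 : Continuous fun q : Triples 3 => q.1.2.2 :=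
  continuous_snd.comp (continuous_snd.comp continuous_subtype_val)

lemma invT_spec {p : Gr 3 4 × Triples 3} (hp : p.1 ∈ Ub b) :
    ((invT b p).1.1.1 = (p.2.1.1.1.map (J b)).map (clm (gop b p.1))) ∧
    ((invT b p).1.2.1.1 = (p.2.1.2.1.1.map (J b)).map (clm (gop b p.1))) ∧
    ((invT b p).1.2.2.1 = (p.2.1.2.2.1.map (J b)).map (clm (gop b p.1))) := by
  erw [invT, dif_pos hp]
  exact ⟨rfl, rfl, rfl⟩

lemma contOn_invT : ContinuousOn (invT b) (tgtSet b) := by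
  refine (Topology.IsEmbedding.subtypeVal (p := @GoodTriple 4)).isInducing.continuousOn_iff.mpr ?_
  have c1 : ContinuousOn (fun p => (invT b p).1.1) (tgtSet b) := by
    apply continuousOn_into_Gr
    apply ContinuousOn.congr (contOn_invT_matrix b _ cont_tsel1)
    intro p hp
    show pm (invT b p).1.1 = _
    rw [pm, (invT_spec b (mem_tgt b hp)).1]
  have c2 : ContinuousOn (fun p => (invT b p).1.2.1) (tgtSet b) := by
    apply continuousOn_into_Gr
    apply ContinuousOn.congr (contOn_invT_matrix b _ cont_tsel2)
    intro p hp
    show pm (invT b p).1.2.1 = _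
    rw [pm, (invT_spec b (mem_tgt b hp)).2.1]
  have c3 : ContinuousOn (fun p => (invT b p).1.2.2) (tgtSet b) := by
    apply continuousOn_into_Gr
    apply ContinuousOn.congr (contOn_invT_matrix b _ cont_tsel3)
    intro p hp
    show pm (invT b p).1.2.2 = _
    rw [pm, (invT_spec b (mem_tgt b hp)).2.2]
  exact c1.prodMk (c2.prodMk c3)

end TrivCont

-- Chunk 13: final assembly
section Final
variable (b : Gr 3 4)

def trivPE : PartialEquiv (Triples 4) (Gr 3 4 × Triples 3) where
  toFun := fun t => (piMap t, fiber b t)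
  invFun := invT b
  source := srcSet b
  target := tgtSet b
  map_source' := fun t ht => ⟨ht, trivial⟩
  map_target' := fun p hp => by
    show piMap (invT b p) ∈ Ub b
    rw [invT_span b (mem_tgt b hp)]
    exact mem_tgt b hp
  left_inv' := fun t ht => left_inv' b ht
  right_inv' := fun p hp => right_inv' b (mem_tgt b hp)

def trivPH : OpenPartialHomeomorph (Triples 4) (Gr 3 4 × Triples 3) where
  toPartialEquiv := trivPE b
  open_source := (isOpen_Ub b).preimage continuous_piMap
  open_target := (isOpen_Ub b).prod isOpen_univ
  continuousOn_toFun := (continuous_piMap.continuousOn).prodMk (contOn_fiber b)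
  continuousOn_invFun := contOn_invT b

def trivB : Bundle.Trivialization (Triples 3) piMap where
  toOpenPartialHomeomorph := trivPH b
  baseSet := Ub b
  open_baseSet := isOpen_Ub b
  source_eq := rfl
  target_eq := rfl
  proj_toFun := fun t _ => rfl

end Final
end St8
end St8dev

-- STATEMENT 8
theorem stmt8 :
    ∃ π : Triples 4 → Gr 3 4, Continuous π ∧
      (∀ p : Triples 4, (π p).1 = p.1.1.1 ⊔ p.1.2.1.1 ⊔ p.1.2.2.1) ∧
      ∀ b : Gr 3 4, ∃ e : Bundle.Trivialization (Triples 3) π, b ∈ e.baseSet := by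
  exact ⟨St8.piMap, St8.continuous_piMap, fun _ => rfl,
    fun b => ⟨St8.trivB b, St8.base_mem_Ub b⟩⟩

end
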